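/- arXiv:1308.2802 — 15 statements merged into one kernel-verified Lean document; each statement's English description precedes it below -/
import Mathlib

section
/- Let S be a monoid with group of units G equipped with a length function. Then for all a, b ∈ S: (i) Sa = Sb if and only if a = ub for some unit u; (ii) aS = bS if and only if a = bu for some unit u; (iii) SaS = SbS if and only if a = ubv for some units u, v. Consequently Green's relations L, R and J on S are given by multiplication by units. -/
/-- A length function on a monoid: a homomorphism to (ℕ, +) whose zero set is
exactly the set of units. -/
def IsLengthFunction {S : Type*} [Monoid S] (l : S → ℕ) : Prop :=
  (∀ a b : S, l (a * b) = l a + l b) ∧ ∀ a : S, l a = 0 ↔ IsUnit a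

/-- The principal right ideal `aS`. -/
def rIdeal {S : Type*} [Monoid S] (a : S) : Set S := Set.range (a * ·)

/-- The principal left ideal `Sa`. -/
def lIdeal {S : Type*} [Monoid S] (a : S) : Set S := Set.range (· * a)

/-- The principal two-sided ideal `SaS`. -/
def tIdeal {S : Type*} [Monoid S] (a : S) : Set S := {x | ∃ s t : S, x = s * a * t}

theorem stmt0 {S : Type*} [Monoid S] (l : S → ℕ) (hl : IsLengthFunction l) :
    (∀ a b : S, lIdeal a = lIdeal b ↔ ∃ u : S, IsUnit u ∧ a = u * b) ∧
    (∀ a b : S, rIdeal a = rIdeal b ↔ ∃ u : S, IsUnit u ∧ a = b * u) ∧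
    (∀ a b : S, tIdeal a = tIdeal b ↔ ∃ u v : S, IsUnit u ∧ IsUnit v ∧ a = u * b * v) := by
  obtain ⟨hadd, hunit⟩ := hl
  refine ⟨fun a b => ⟨fun h => ?_, fun ⟨u, hu, hab⟩ => ?_⟩,
          fun a b => ⟨fun h => ?_, fun ⟨u, hu, hab⟩ => ?_⟩,
          fun a b => ⟨fun h => ?_, fun ⟨u, v, hu, hv, hab⟩ => ?_⟩⟩
  · -- left forward
    have ha : a ∈ lIdeal b := h ▸ ⟨1, one_mul a⟩
    have hb : b ∈ lIdeal a := h.symm ▸ ⟨1, one_mul b⟩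
    obtain ⟨s, hs⟩ := ha
    obtain ⟨t, ht⟩ := hb
    refine ⟨s, (hunit s).mp ?_, hs.symm⟩
    have h1 : l a = l s + l b := hs ▸ hadd s b
    have h2 : l b = l t + l a := ht ▸ hadd t a
    omega
  · obtain ⟨u, rfl⟩ := hu
    ext x
    constructor
    · rintro ⟨y, rfl⟩
      exact ⟨y * u, by simp [hab, mul_assoc]⟩
    · rintro ⟨y, rfl⟩
      exact ⟨y * (u⁻¹ : Sˣ), by simp [hab, mul_assoc]⟩
  · -- right forward
    have ha : a ∈ rIdeal b := h ▸ ⟨1, mul_one a⟩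
    have hb : b ∈ rIdeal a := h.symm ▸ ⟨1, mul_one b⟩
    obtain ⟨s, hs⟩ := ha
    obtain ⟨t, ht⟩ := hb
    refine ⟨s, (hunit s).mp ?_, hs.symm⟩
    have h1 : l a = l b + l s := hs ▸ hadd b s
    have h2 : l b = l a + l t := ht ▸ hadd a t
    omega
  · obtain ⟨u, rfl⟩ := hu
    ext x
    constructor
    · rintro ⟨y, rfl⟩
      exact ⟨(u : S) * y, by simp [hab, mul_assoc]⟩
    · rintro ⟨y, rfl⟩
      exact ⟨(u⁻¹ : Sˣ) * y, by simp [hab, mul_assoc]⟩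
  · -- two-sided forward
    have ha : a ∈ tIdeal b := h ▸ ⟨1, 1, by simp⟩
    have hb : b ∈ tIdeal a := h.symm ▸ ⟨1, 1, by simp⟩
    obtain ⟨s, t, hs⟩ := ha
    obtain ⟨p, q, hp⟩ := hb
    refine ⟨s, t, (hunit s).mp ?_, (hunit t).mp ?_, hs⟩ <;>
    · have h1 : l a = l s + l b + l t := by rw [hs, hadd, hadd]
      have h2 : l b = l p + l a + l q := by rw [hp, hadd, hadd]
      omega
  · obtain ⟨u, rfl⟩ := hu
    obtain ⟨v, rfl⟩ := hv
    ext x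
    constructor
    · rintro ⟨s, t, rfl⟩
      exact ⟨s * u, v * t, by simp [hab, mul_assoc]⟩
    · rintro ⟨s, t, rfl⟩
      exact ⟨s * (u⁻¹ : Sˣ), (v⁻¹ : Sˣ) * t, by
        simp [hab, mul_assoc]⟩
end

section
/- Let S be a monoid equipped with a length function. Then: (i) an element a ∈ S is an atom if and only if aS is a maximal element of the set of proper principal right ideals of S ordered by inclusion; (ii) an element a ∈ S is an atom if and only if Sa is a maximal element of the set of proper principal left ideals of S ordered by inclusion. -/
/-- An atom of a monoid: a non-unit that cannot be factored into two non-units. -/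
def IsMonoidAtom {S : Type*} [Monoid S] (a : S) : Prop :=
  ¬IsUnit a ∧ ∀ b c : S, a = b * c → IsUnit b ∨ IsUnit c

theorem stmt1 {S : Type*} [Monoid S] (l : S → ℕ) (hl : IsLengthFunction l) :
    (∀ a : S, IsMonoidAtom a ↔
      (rIdeal a ≠ Set.univ ∧
        ∀ b : S, rIdeal a ⊆ rIdeal b → rIdeal b ≠ Set.univ → rIdeal a = rIdeal b)) ∧
    (∀ a : S, IsMonoidAtom a ↔
      (lIdeal a ≠ Set.univ ∧
        ∀ b : S, lIdeal a ⊆ lIdeal b → lIdeal b ≠ Set.univ → lIdeal a = lIdeal b)) := by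
  obtain ⟨hadd, hzero⟩ := hl
  have hone : l 1 = 0 := (hzero 1).2 isUnit_one
  have rmem : ∀ a x : S, x ∈ rIdeal a ↔ ∃ y, a * y = x := by
    intro a x; rfl
  have lmem : ∀ a x : S, x ∈ lIdeal a ↔ ∃ y, y * a = x := by
    intro a x; rfl
  have runiv : ∀ a : S, rIdeal a = Set.univ ↔ IsUnit a := by
    intro a
    constructor
    · intro h
      obtain ⟨c, hc⟩ := (rmem a 1).1 (h ▸ Set.mem_univ 1)
      have h2 := hadd a c
      rw [hc, hone] at h2
      exact (hzero a).1 (by omega)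
    · intro h
      ext x
      simp only [Set.mem_univ, iff_true]
      exact (rmem a x).2 ⟨↑h.unit⁻¹ * x, by rw [← mul_assoc, IsUnit.mul_val_inv, one_mul]⟩
  have luniv : ∀ a : S, lIdeal a = Set.univ ↔ IsUnit a := by
    intro a
    constructor
    · intro h
      obtain ⟨c, hc⟩ := (lmem a 1).1 (h ▸ Set.mem_univ 1)
      have h2 := hadd c a
      rw [hc, hone] at h2
      exact (hzero a).1 (by omega)
    · intro h
      ext x
      simp only [Set.mem_univ, iff_true]
      exact (lmem a x).2 ⟨x * ↑h.unit⁻¹, by rw [mul_assoc, IsUnit.val_inv_mul, mul_one]⟩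
  have rsub : ∀ a b : S, rIdeal a ⊆ rIdeal b ↔ ∃ c, a = b * c := by
    intro a b
    constructor
    · intro h
      obtain ⟨c, hc⟩ := (rmem b a).1 (h ((rmem a a).2 ⟨1, mul_one a⟩))
      exact ⟨c, hc.symm⟩
    · rintro ⟨c, rfl⟩ x hx
      obtain ⟨y, hy⟩ := (rmem _ x).1 hx
      exact (rmem b x).2 ⟨c * y, by rw [← mul_assoc]; exact hy⟩
  have lsub : ∀ a b : S, lIdeal a ⊆ lIdeal b ↔ ∃ c, a = c * b := by
    intro a b
    constructor
    · intro h
      obtain ⟨c, hc⟩ := (lmem b a).1 (h ((lmem a a).2 ⟨1, one_mul a⟩))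
      exact ⟨c, hc.symm⟩
    · rintro ⟨c, rfl⟩ x hx
      obtain ⟨y, hy⟩ := (lmem _ x).1 hx
      exact (lmem b x).2 ⟨y * c, by rw [mul_assoc]; exact hy⟩
  constructor
  · intro a
    constructor
    · rintro ⟨hna, hatom⟩
      refine ⟨fun h => hna ((runiv a).1 h), fun b hab hb => ?_⟩
      obtain ⟨c, hc⟩ := (rsub a b).1 hab
      have hbu : ¬IsUnit b := fun h => hb ((runiv b).2 h)
      have hcu : IsUnit c := (hatom b c hc).resolve_left hbu
      refine Set.Subset.antisymm hab ((rsub b a).2 ⟨↑hcu.unit⁻¹, ?_⟩)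
      rw [hc, mul_assoc, IsUnit.mul_val_inv, mul_one]
    · rintro ⟨hu, hmax⟩
      refine ⟨fun h => hu ((runiv a).2 h), fun b c hbc => ?_⟩
      by_contra h
      push_neg at h
      obtain ⟨hb, hc⟩ := h
      have hab : rIdeal a ⊆ rIdeal b := (rsub a b).2 ⟨c, hbc⟩
      have heq := hmax b hab (fun h => hb ((runiv b).1 h))
      obtain ⟨d, hd⟩ := (rsub b a).1 heq.ge
      -- b = a * d = b * c * d
      have h2 : l b = l b + l c + l d := by
        have e1 := hadd a d
        rw [← hd, hbc, hadd b c] at e1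
        omega
      exact hc ((hzero c).1 (by omega))
  · intro a
    constructor
    · rintro ⟨hna, hatom⟩
      refine ⟨fun h => hna ((luniv a).1 h), fun b hab hb => ?_⟩
      obtain ⟨c, hc⟩ := (lsub a b).1 hab
      have hbu : ¬IsUnit b := fun h => hb ((luniv b).2 h)
      have hcu : IsUnit c := (hatom c b hc).resolve_right hbu
      refine Set.Subset.antisymm hab ((lsub b a).2 ⟨↑hcu.unit⁻¹, ?_⟩)
      rw [hc, ← mul_assoc, IsUnit.val_inv_mul, one_mul]
    · rintro ⟨hu, hmax⟩
      refine ⟨fun h => hu ((luniv a).2 h), fun b c hbc => ?_⟩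
      by_contra h
      push_neg at h
      obtain ⟨hb, hc⟩ := h
      have hab : lIdeal a ⊆ lIdeal c := (lsub a c).2 ⟨b, hbc⟩
      have heq := hmax c hab (fun h => hc ((luniv c).1 h))
      obtain ⟨d, hd⟩ := (lsub c a).1 heq.ge
      -- c = d * a = d * (b * c)
      have h2 : l c = l d + l b + l c := by
        have e1 := hadd d a
        rw [← hd, hbc, hadd b c] at e1
        omega
      exact hb ((hzero b).1 (by omega))
end

section
/- Let S be a Levi monoid and let a, b ∈ S with aS ⊆ bS. Then the set [aS, bS] of all principal right ideals cS with aS ⊆ cS ⊆ bS is totally ordered by inclusion and finite. -/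
/-- An equidivisible monoid. -/
def Equidivisible (S : Type*) [Monoid S] : Prop :=
  ∀ a b c d : S, a * b = c * d →
    (∃ u : S, a = c * u ∧ d = u * b) ∨ ∃ v : S, c = a * v ∧ b = v * d

/-- A Levi monoid: an equidivisible monoid equipped with a length function and
containing at least one non-unit. -/
def IsLeviMonoid (S : Type*) [Monoid S] : Prop :=
  Equidivisible S ∧ (∃ l : S → ℕ, IsLengthFunction l) ∧ ∃ a : S, ¬IsUnit a

theorem stmt3 {S : Type*} [Monoid S] (hS : IsLeviMonoid S) (a b : S)
    (hab : rIdeal a ⊆ rIdeal b) :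
    IsChain (· ⊆ ·) {T : Set S | (∃ c : S, T = rIdeal c) ∧ rIdeal a ⊆ T ∧ T ⊆ rIdeal b} ∧
    Set.Finite {T : Set S | (∃ c : S, T = rIdeal c) ∧ rIdeal a ⊆ T ∧ T ⊆ rIdeal b} := by
  obtain ⟨heq, ⟨l, hladd, hlunit⟩, -⟩ := hS
  have hself : ∀ x : S, x ∈ rIdeal x := fun x => ⟨1, mul_one x⟩
  have hsub : ∀ x c : S, (∃ u, c * u = x) → rIdeal x ⊆ rIdeal c := by
    rintro x c ⟨u, rfl⟩ y ⟨z, rfl⟩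
    exact ⟨u * z, (mul_assoc c u z).symm⟩
  -- key antisymmetry-with-length lemma
  have key : ∀ c d : S, l c = l d → rIdeal c ⊆ rIdeal d → rIdeal d ⊆ rIdeal c := by
    intro c d hlen hcd
    obtain ⟨t, ht'⟩ := hcd (hself c)
    have ht : d * t = c := ht'
    have hlt : l t = 0 := by
      have := hladd d t
      rw [ht] at this
      omega
    obtain ⟨ut, hut⟩ := (hlunit t).mp hlt
    refine hsub d c ⟨↑ut⁻¹, ?_⟩
    have : c * ↑ut⁻¹ = d * (t * ↑ut⁻¹) := by rw [← ht, mul_assoc]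
    rw [this, ← hut, Units.mul_inv, mul_one]
  have hchain : IsChain (· ⊆ ·)
      {T : Set S | (∃ c : S, T = rIdeal c) ∧ rIdeal a ⊆ T ∧ T ⊆ rIdeal b} := by
    rintro T₁ ⟨⟨c, rfl⟩, hac, -⟩ T₂ ⟨⟨d, rfl⟩, had, -⟩ _
    obtain ⟨u, hu'⟩ := hac (hself a)
    obtain ⟨w, hw'⟩ := had (hself a)
    have hu : c * u = a := hu'
    have hw : d * w = a := hw'
    rcases heq c u d w (by rw [hu, hw]) with ⟨t, ht, -⟩ | ⟨v, hv, -⟩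
    · exact Or.inl (hsub c d ⟨t, ht.symm⟩)
    · exact Or.inr (hsub d c ⟨v, hv.symm⟩)
  refine ⟨hchain, ?_⟩
  rw [← Set.finite_coe_iff]
  have bound : ∀ c : S, rIdeal a ⊆ rIdeal c → l c < l a + 1 := by
    intro c hc
    obtain ⟨u, hu'⟩ := hc (hself a)
    have hu : c * u = a := hu'
    have := hladd c u
    rw [hu] at this
    omega
  refine Finite.of_injective
    (fun T : {T : Set S | (∃ c : S, T = rIdeal c) ∧ rIdeal a ⊆ T ∧ T ⊆ rIdeal b} =>
      (⟨l T.2.1.choose, bound _ (T.2.1.choose_spec ▸ T.2.2.1)⟩ : Fin (l a + 1))) ?_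
  intro T₁ T₂ hf
  have h₁ : (T₁ : Set S) = rIdeal T₁.2.1.choose := T₁.2.1.choose_spec
  have h₂ : (T₂ : Set S) = rIdeal T₂.2.1.choose := T₂.2.1.choose_spec
  have hlen : l T₁.2.1.choose = l T₂.2.1.choose := congrArg Fin.val hf
  by_contra hne
  have hne' : (T₁ : Set S) ≠ T₂ := fun h => hne (Subtype.ext h)
  rcases hchain T₁.2 T₂.2 hne' with h | h
  · exact hne' (by rw [h₁, h₂]; rw [h₁, h₂] at h
                   exact Set.Subset.antisymm h (key _ _ hlen h))
  · exact hne' (by rw [h₁, h₂]; rw [h₁, h₂] at h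
                   exact Set.Subset.antisymm (key _ _ hlen.symm h) h)
end

section
/- Let S be a Levi monoid. Define ν : S → ℕ by ν(a) = |[aS, S]| − 1, where [aS, S] is the (finite) set of principal right ideals cS with aS ⊆ cS ⊆ S. Then ν is a length function on S satisfying ν(a) = 1 if and only if a is an atom (i.e. ν is normalized), and ν is the unique normalized length function on S: any length function λ on S with λ(a) = 1 for every atom a equals ν. -/
/-- The interval `[aS, S]` of principal right ideals containing `aS`, and the
function `ν(a) = |[aS,S]| - 1`. -/
noncomputable def nu {S : Type*} [Monoid S] (a : S) : ℕ :=
  {T : Set S | (∃ c : S, T = rIdeal c) ∧ rIdeal a ⊆ T}.ncard - 1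

section Aux
variable {S : Type*} [Monoid S] {l : S → ℕ}

def idealsAbove {S : Type*} [Monoid S] (a : S) : Set (Set S) :=
  {T : Set S | (∃ c : S, T = rIdeal c) ∧ rIdeal a ⊆ T}

lemma nu_def (a : S) : nu a = (idealsAbove a).ncard - 1 := rfl

lemma rIdeal_subset_iff {a c : S} : rIdeal a ⊆ rIdeal c ↔ ∃ u, a = c * u := by
  constructor
  · intro h
    obtain ⟨u, hu⟩ := h ⟨1, mul_one a⟩
    exact ⟨u, hu.symm⟩
  · rintro ⟨u, rfl⟩ x ⟨s, rfl⟩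
    exact ⟨u * s, (mul_assoc _ _ _).symm⟩

lemma l_one (hl : IsLengthFunction l) : l 1 = 0 := (hl.2 1).mpr isUnit_one

lemma unit_of_mul_eq_one (hl : IsLengthFunction l) {a b : S} (h : a * b = 1) :
    IsUnit a := by
  have h1 := hl.1 a b
  rw [h, l_one hl] at h1
  exact (hl.2 a).mp (by omega)

lemma rIdeal_eq_iff (hl : IsLengthFunction l) {a c : S} :
    rIdeal a = rIdeal c ↔ ∃ u, IsUnit u ∧ a = c * u := by
  constructor
  · intro h
    obtain ⟨u, hu⟩ := rIdeal_subset_iff.mp h.le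
    obtain ⟨v, hv⟩ := rIdeal_subset_iff.mp h.ge
    have h1 := hl.1 c u
    have h2 := hl.1 a v
    rw [← hu] at h1
    rw [← hv] at h2
    exact ⟨u, (hl.2 u).mp (by omega), hu⟩
  · rintro ⟨u, hu, rfl⟩
    obtain ⟨w, hw⟩ := hu.exists_right_inv
    refine le_antisymm (rIdeal_subset_iff.mpr ⟨u, rfl⟩) (rIdeal_subset_iff.mpr ⟨w, ?_⟩)
    rw [mul_assoc, hw, mul_one]

lemma l_congr (hl : IsLengthFunction l) {a c : S} (h : rIdeal a = rIdeal c) :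
    l a = l c := by
  obtain ⟨u, hu, rfl⟩ := (rIdeal_eq_iff hl).mp h
  rw [hl.1, (hl.2 u).mpr hu]
  omega

lemma rIdeal_one : rIdeal (1 : S) = Set.univ :=
  Set.eq_univ_of_forall fun x => ⟨x, one_mul x⟩

lemma rIdeal_unit {u : S} (hu : IsUnit u) : rIdeal u = Set.univ := by
  obtain ⟨w, hw⟩ := hu.exists_right_inv
  exact Set.eq_univ_of_forall fun x => ⟨w * x, by show u * (w * x) = x; rw [← mul_assoc, hw, one_mul]⟩

lemma univ_mem_idealsAbove (a : S) : Set.univ ∈ idealsAbove a :=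
  ⟨⟨1, rIdeal_one.symm⟩, Set.subset_univ _⟩

lemma self_mem_idealsAbove (a : S) : rIdeal a ∈ idealsAbove a :=
  ⟨⟨a, rfl⟩, le_rfl⟩

/-- Comparability of left divisors of a common element. -/
lemma rIdeal_eq_of_l_eq (hE : Equidivisible S) (hl : IsLengthFunction l)
    {b v v' : S} (hv : ∃ u, b = v * u) (hv' : ∃ u, b = v' * u)
    (hvv : l v = l v') : rIdeal v = rIdeal v' := by
  obtain ⟨u, hu⟩ := hv
  obtain ⟨u', hu'⟩ := hv'
  rcases hE v u v' u' (hu.symm.trans hu') with ⟨w, hw, -⟩ | ⟨w, hw, -⟩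
  · have h1 := hl.1 v' w
    rw [← hw] at h1
    exact (rIdeal_eq_iff hl).mpr ⟨w, (hl.2 w).mp (by omega), hw⟩
  · have h1 := hl.1 v w
    rw [← hw] at h1
    exact ((rIdeal_eq_iff hl).mpr ⟨w, (hl.2 w).mp (by omega), hw⟩).symm

lemma idealsAbove_finite (hE : Equidivisible S) (hl : IsLengthFunction l) (a : S) :
    (idealsAbove a).Finite := by
  classical
  set F : Set S → ℕ := fun T => if h : ∃ c : S, T = rIdeal c then l h.choose else 0 with hF
  have hFc : ∀ c : S, F (rIdeal c) = l c := by
    intro c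
    have h : ∃ c' : S, rIdeal c = rIdeal c' := ⟨c, rfl⟩
    simp only [hF, dif_pos h]
    exact (l_congr hl h.choose_spec).symm
  have hinj : Set.InjOn F (idealsAbove a) := by
    rintro T ⟨⟨c, rfl⟩, hc⟩ T' ⟨⟨c', rfl⟩, hc'⟩ hFe
    rw [hFc, hFc] at hFe
    exact rIdeal_eq_of_l_eq hE hl (rIdeal_subset_iff.mp hc) (rIdeal_subset_iff.mp hc') hFe
  apply Set.Finite.of_finite_image _ hinj
  apply Set.Finite.subset (Set.finite_Iic (l a))
  rintro n ⟨T, ⟨⟨c, rfl⟩, hc⟩, rfl⟩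
  obtain ⟨u, hu⟩ := rIdeal_subset_iff.mp hc
  rw [hFc]
  have := hl.1 c u
  rw [← hu] at this
  simpa using (by omega : l c ≤ l a)

lemma image_rIdeal (a v : S) : (a * ·) '' rIdeal v = rIdeal (a * v) := by
  unfold rIdeal
  rw [← Set.range_comp]
  funext x
  simp [Function.comp, mul_assoc]

lemma idealsAbove_mul (hE : Equidivisible S) (a b : S) :
    idealsAbove (a * b) = idealsAbove a ∪ (Set.image (a * ·)) '' (idealsAbove b) := by
  ext T
  constructor
  · rintro ⟨⟨c, rfl⟩, hsub⟩
    obtain ⟨u, hu⟩ := rIdeal_subset_iff.mp hsub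
    rcases hE a b c u hu with ⟨w, hw1, -⟩ | ⟨w, hw1, hw2⟩
    · exact Or.inl ⟨⟨c, rfl⟩, rIdeal_subset_iff.mpr ⟨w, hw1⟩⟩
    · refine Or.inr ⟨rIdeal w, ⟨⟨w, rfl⟩, rIdeal_subset_iff.mpr ⟨u, hw2⟩⟩, ?_⟩
      rw [image_rIdeal, ← hw1]
  · rintro (⟨⟨c, rfl⟩, hsub⟩ | ⟨T', ⟨⟨v, rfl⟩, hsub⟩, rfl⟩)
    · obtain ⟨u, hu⟩ := rIdeal_subset_iff.mp hsub
      exact ⟨⟨c, rfl⟩, rIdeal_subset_iff.mpr ⟨u * b, by rw [hu, mul_assoc]⟩⟩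
    · obtain ⟨u, hu⟩ := rIdeal_subset_iff.mp hsub
      rw [image_rIdeal]
      exact ⟨⟨a * v, rfl⟩, rIdeal_subset_iff.mpr ⟨u, by rw [hu, mul_assoc]⟩⟩

lemma idealsAbove_inter (a b : S) :
    idealsAbove a ∩ (Set.image (a * ·)) '' (idealsAbove b) = {rIdeal a} := by
  ext T
  constructor
  · rintro ⟨⟨⟨c, rfl⟩, hsub⟩, T', ⟨⟨v, rfl⟩, -⟩, hT⟩
    rw [image_rIdeal] at hT
    have h2 : rIdeal c ⊆ rIdeal a := by
      rw [← hT]; exact rIdeal_subset_iff.mpr ⟨v, rfl⟩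
    exact le_antisymm h2 hsub
  · rintro rfl
    refine ⟨self_mem_idealsAbove a, rIdeal 1, ⟨⟨1, rfl⟩, Set.subset_univ _ |>.trans_eq rIdeal_one.symm⟩, ?_⟩
    rw [image_rIdeal, mul_one]

lemma injOn_image_mul (hE : Equidivisible S) (hl : IsLengthFunction l) (a b : S) :
    Set.InjOn (Set.image (a * ·)) (idealsAbove b) := by
  rintro T ⟨⟨v, rfl⟩, hv⟩ T' ⟨⟨v', rfl⟩, hv'⟩ h
  rw [image_rIdeal, image_rIdeal] at h
  have h1 := l_congr hl h
  rw [hl.1, hl.1] at h1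
  exact rIdeal_eq_of_l_eq hE hl (rIdeal_subset_iff.mp hv) (rIdeal_subset_iff.mp hv')
    (by omega)

lemma ncard_idealsAbove_mul (hE : Equidivisible S) (hl : IsLengthFunction l) (a b : S) :
    (idealsAbove (a * b)).ncard + 1 = (idealsAbove a).ncard + (idealsAbove b).ncard := by
  have hfa := idealsAbove_finite hE hl a
  have hfb := idealsAbove_finite hE hl b
  have hfb' : ((Set.image (a * ·)) '' (idealsAbove b)).Finite := hfb.image _
  have himg : ((Set.image (a * ·)) '' (idealsAbove b)).ncard = (idealsAbove b).ncard :=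
    Set.ncard_image_of_injOn (injOn_image_mul hE hl a b)
  have hu := Set.ncard_union_add_ncard_inter (idealsAbove a)
    ((Set.image (a * ·)) '' (idealsAbove b)) hfa hfb'
  rw [← idealsAbove_mul hE a b, idealsAbove_inter a b, Set.ncard_singleton, himg] at hu
  exact hu

lemma nonunit_not_mem (hl : IsLengthFunction l) {a : S} (ha : ¬IsUnit a) :
    (1 : S) ∉ rIdeal a := by
  rintro ⟨s, hs⟩
  exact ha (unit_of_mul_eq_one hl hs)

lemma nu_unit (hl : IsLengthFunction l) {a : S} (ha : IsUnit a) : nu a = 0 := by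
  have : idealsAbove a = {Set.univ} := by
    ext T
    constructor
    · rintro ⟨⟨c, rfl⟩, hsub⟩
      obtain ⟨u, hu⟩ := rIdeal_subset_iff.mp hsub
      have h1 := hl.1 c u
      rw [← hu, (hl.2 a).mpr ha] at h1
      exact rIdeal_unit ((hl.2 c).mp (by omega))
    · rintro rfl
      exact univ_mem_idealsAbove a
  rw [nu_def, this, Set.ncard_singleton]

lemma nu_nonunit (hE : Equidivisible S) (hl : IsLengthFunction l) {a : S}
    (ha : ¬IsUnit a) : 1 ≤ nu a := by
  have hne : rIdeal a ≠ Set.univ := by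
    intro h
    exact nonunit_not_mem hl ha (h ▸ Set.mem_univ 1)
  have hsub : {rIdeal a, Set.univ} ⊆ idealsAbove a := by
    rintro T (rfl | rfl)
    · exact self_mem_idealsAbove a
    · exact univ_mem_idealsAbove a
  have h2 : ({rIdeal a, Set.univ} : Set (Set S)).ncard = 2 :=
    Set.ncard_pair hne
  have := Set.ncard_le_ncard hsub (idealsAbove_finite hE hl a)
  rw [h2] at this
  rw [nu_def]
  omega

lemma ncard_pos (hE : Equidivisible S) (hl : IsLengthFunction l) (a : S) :
    1 ≤ (idealsAbove a).ncard :=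
  (Set.ncard_pos (idealsAbove_finite hE hl a)).mpr ⟨_, univ_mem_idealsAbove a⟩

lemma nu_mul (hE : Equidivisible S) (hl : IsLengthFunction l) (a b : S) :
    nu (a * b) = nu a + nu b := by
  have h := ncard_idealsAbove_mul hE hl a b
  have ha := ncard_pos hE hl a
  have hb := ncard_pos hE hl b
  rw [nu_def, nu_def, nu_def]
  omega

lemma nu_length (hE : Equidivisible S) (hl : IsLengthFunction l) :
    IsLengthFunction (nu : S → ℕ) := by
  refine ⟨nu_mul hE hl, fun a => ⟨fun h => ?_, nu_unit hl⟩⟩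
  by_contra ha
  have := nu_nonunit hE hl ha
  omega

lemma nu_atom_iff (hE : Equidivisible S) (hl : IsLengthFunction l) (a : S) :
    nu a = 1 ↔ IsMonoidAtom a := by
  constructor
  · intro h
    have ha : ¬IsUnit a := by
      intro hu
      rw [nu_unit hl hu] at h
      omega
    refine ⟨ha, fun b c hbc => ?_⟩
    by_contra hcon
    push_neg at hcon
    obtain ⟨hb, hc⟩ := hcon
    have h1 := nu_mul hE hl b c
    rw [← hbc, h] at h1
    have := nu_nonunit hE hl hb
    have := nu_nonunit hE hl hc
    omega
  · rintro ⟨ha, hatom⟩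
    have hne : rIdeal a ≠ Set.univ := by
      intro h
      exact nonunit_not_mem hl ha (h ▸ Set.mem_univ 1)
    have : idealsAbove a = {rIdeal a, Set.univ} := by
      ext T
      constructor
      · rintro ⟨⟨c, rfl⟩, hsub⟩
        obtain ⟨u, hu⟩ := rIdeal_subset_iff.mp hsub
        rcases hatom c u hu with hcu | hcu
        · exact Or.inr (rIdeal_unit hcu)
        · exact Or.inl ((rIdeal_eq_iff hl).mpr ⟨u, hcu, hu⟩).symm
      · rintro (rfl | rfl)
        · exact self_mem_idealsAbove a
        · exact univ_mem_idealsAbove a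
    rw [nu_def, this, Set.ncard_pair hne]

lemma nu_unique (hE : Equidivisible S) (hl : IsLengthFunction l)
    (l' : S → ℕ) (hl' : IsLengthFunction l') (hatom : ∀ a : S, IsMonoidAtom a → l' a = 1) :
    l' = (nu : S → ℕ) := by
  have key : ∀ n : ℕ, ∀ a : S, nu a ≤ n → l' a = nu a := by
    intro n
    induction n with
    | zero =>
      intro a ha
      have hu : IsUnit a := ((nu_length hE hl).2 a).mp (by omega)
      rw [(hl'.2 a).mpr hu, nu_unit hl hu]
    | succ n ih =>
      intro a ha
      by_cases hu : IsUnit a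
      · rw [(hl'.2 a).mpr hu, nu_unit hl hu]
      by_cases hat : IsMonoidAtom a
      · rw [hatom a hat, (nu_atom_iff hE hl a).mpr hat]
      · obtain ⟨b, c, hbc, hb, hc⟩ : ∃ b c : S, a = b * c ∧ ¬IsUnit b ∧ ¬IsUnit c := by
          by_contra hcon
          push_neg at hcon
          exact hat ⟨hu, fun b c h => by
            by_cases hub : IsUnit b
            · exact Or.inl hub
            · exact Or.inr (hcon b c h hub)⟩
        have hnb := nu_nonunit hE hl hb
        have hnc := nu_nonunit hE hl hc
        have hm : nu a = nu b + nu c := by rw [hbc]; exact nu_mul hE hl b c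
        rw [hbc, hl'.1, ih b (by omega), ih c (by omega), ← nu_mul hE hl]
  funext a
  exact key (nu a) a le_rfl

end Aux

theorem stmt4 {S : Type*} [Monoid S] (hS : IsLeviMonoid S) :
    IsLengthFunction (nu : S → ℕ) ∧
    (∀ a : S, nu a = 1 ↔ IsMonoidAtom a) ∧
    ∀ l : S → ℕ, IsLengthFunction l → (∀ a : S, IsMonoidAtom a → l a = 1) →
      l = (nu : S → ℕ) := by
  obtain ⟨hE, ⟨l, hl⟩, -⟩ := hS
  exact ⟨nu_length hE hl, nu_atom_iff hE hl,
    fun l' hl' hatom => nu_unique hE hl l' hl' hatom⟩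
end

section
/- Let S be a Levi monoid and suppose a₁a₂⋯a_m = b₁b₂⋯b_n where all a_i and b_j are atoms of S. Then m = n, and there exist units g₁, …, g_{n−1} of S such that a₁ = b₁g₁, a_i = g_{i−1}⁻¹ b_i g_i for 1 < i < n, and a_n = g_{n−1}⁻¹ b_n. -/
lemma unit_mul_atom {S : Type*} [Monoid S] (u : Sˣ) {a : S}
    (ha : IsMonoidAtom a) : IsMonoidAtom (↑u * a) := by
  constructor
  · intro h
    exact ha.1 (by simpa using (u⁻¹.isUnit.mul h))
  · intro b c hbc
    have : a = (↑u⁻¹ * b) * c := by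
      rw [mul_assoc, ← hbc, ← mul_assoc, Units.inv_mul, one_mul]
    rcases ha.2 _ _ this with h | h
    · left
      simpa using (u.isUnit.mul h)
    · exact Or.inr h

lemma key {S : Type*} [Monoid S] (E : Equidivisible S) (l : S → ℕ)
    (hl : IsLengthFunction l) :
    ∀ (l1 l2 : List S) (g : Sˣ), (∀ x ∈ l1, IsMonoidAtom x) →
      (∀ x ∈ l2, IsMonoidAtom x) → (↑g * l1.prod = l2.prod) →
      ∃ h : l1.length = l2.length, ∃ G : Fin (l2.length + 1) → Sˣ,
        G 0 = g ∧ G (Fin.last _) = 1 ∧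
        ∀ i : Fin l2.length,
          l1.get (Fin.cast h.symm i) = ↑(G i.castSucc)⁻¹ * l2.get i * ↑(G i.succ) := by
  intro l1
  induction l1 with
  | nil =>
    intro l2 g _ h2 heq
    simp only [List.prod_nil, mul_one] at heq
    match l2 with
    | q :: t2 =>
      exfalso
      have hq := (h2 q (by simp)).1
      apply hq
      rw [← (hl.2 q)]
      have : l (↑g) = 0 := (hl.2 _).2 g.isUnit
      rw [heq, List.prod_cons, hl.1] at this
      omega
    | [] =>
      refine ⟨rfl, fun _ => 1, ?_, rfl, fun i => i.elim0⟩
      exact (Units.ext (by simpa using heq)).symm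
  | cons p t ih =>
    intro l2 g h1 h2 heq
    match l2 with
    | [] =>
      exfalso
      simp only [List.prod_cons, List.prod_nil] at heq
      have : IsUnit (p * t.prod) := by
        have : p * t.prod = ↑g⁻¹ * 1 := by rw [← heq, ← mul_assoc, Units.inv_mul, one_mul]
        rw [this]; exact (g⁻¹.isUnit.mul isUnit_one)
      have hp0 : l (p * t.prod) = 0 := (hl.2 _).2 this
      rw [hl.1] at hp0
      exact (h1 p (by simp)).1 ((hl.2 p).1 (by omega))
    | q :: t2 =>
      simp only [List.prod_cons] at heq
      rw [← mul_assoc] at heq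
      have hga : IsMonoidAtom (↑g * p) := unit_mul_atom g (h1 p (by simp))
      have hq := h2 q (by simp)
      obtain ⟨g', hg'1, hg'2⟩ :
          ∃ g' : Sˣ, ↑g * p = q * ↑g' ∧ ↑g' * t.prod = t2.prod := by
        rcases E _ _ _ _ heq with ⟨u, hu1, hu2⟩ | ⟨v, hv1, hv2⟩
        · have hu : IsUnit u := (hga.2 _ _ hu1).resolve_left hq.1
          exact ⟨hu.unit, by simp [hu1], by simp [← hu2]⟩
        · have hv : IsUnit v := (hq.2 _ _ hv1).resolve_left hga.1
          refine ⟨hv.unit⁻¹, ?_, ?_⟩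
          · rw [hv1, mul_assoc]
            simp
          · rw [hv2, ← mul_assoc]
            simp
      obtain ⟨h, G', hG0, hGl, hGi⟩ :=
        ih t2 g' (fun x hx => h1 x (by simp [hx])) (fun x hx => h2 x (by simp [hx])) hg'2
      refine ⟨by simpa using h, Fin.cons g G', rfl, ?_, ?_⟩
      · have e : Fin.last (q :: t2).length = (Fin.last t2.length).succ := rfl
        rw [e, Fin.cons_succ]
        exact hGl
      · intro i
        induction i using Fin.cases with
        | zero =>
          simp only [List.length_cons, List.get_eq_getElem, Fin.coe_cast, Fin.val_zero,
            List.getElem_cons_zero, Fin.castSucc_zero, Fin.cons_zero, Fin.cons_succ, hG0]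
          calc p = ↑g⁻¹ * (↑g * p) := by rw [← mul_assoc]; simp
            _ = ↑g⁻¹ * q * ↑g' := by rw [hg'1, mul_assoc]
        | succ j =>
          have := hGi j
          simp only [List.length_cons, List.get_eq_getElem, Fin.coe_cast, Fin.val_succ,
            List.getElem_cons_succ] at this ⊢
          rw [← Fin.succ_castSucc, Fin.cons_succ, Fin.cons_succ]
          exact this

/-- If `a₁ ⋯ a_m = b₁ ⋯ b_n` with all factors atoms, then `m = n` and the two
factorizations are interleaved by units `g₀ = 1, g₁, …, g_{n-1}, g_n = 1`
with `a_i = g_{i-1}⁻¹ * b_i * g_i`. -/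
theorem stmt5 {S : Type*} [Monoid S] (hS : IsLeviMonoid S)
    (m n : ℕ) (a : Fin m → S) (b : Fin n → S)
    (ha : ∀ i, IsMonoidAtom (a i)) (hb : ∀ i, IsMonoidAtom (b i))
    (heq : (List.ofFn a).prod = (List.ofFn b).prod) :
    ∃ h : m = n, ∃ g : Fin (n + 1) → Sˣ,
      g 0 = 1 ∧ g (Fin.last n) = 1 ∧
      ∀ i : Fin n,
        a (Fin.cast h.symm i) = (↑(g i.castSucc)⁻¹ : S) * b i * (g i.succ : S) := by
  obtain ⟨E, ⟨l, hl⟩, -⟩ := hS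
  obtain ⟨h, G, hG0, hGl, hGi⟩ := key E l hl (List.ofFn a) (List.ofFn b) 1
    (by intro x hx; rw [List.mem_ofFn] at hx; obtain ⟨i, rfl⟩ := hx; exact ha i)
    (by intro x hx; rw [List.mem_ofFn] at hx; obtain ⟨i, rfl⟩ := hx; exact hb i)
    (by simpa using heq)
  have hmn : m = n := by simpa using h
  have e : n + 1 = (List.ofFn b).length + 1 := by simp
  refine ⟨hmn, fun i => G (Fin.cast e i), ?_, ?_, ?_⟩
  · show G (Fin.cast e 0) = 1
    rw [show Fin.cast e 0 = 0 from rfl]; exact hG0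
  · show G (Fin.cast e (Fin.last n)) = 1
    rw [show Fin.cast e (Fin.last n) = Fin.last (List.ofFn b).length from Fin.ext (by simp)]
    exact hGl
  · intro i
    have e' : n = (List.ofFn b).length := by simp
    have := hGi (Fin.cast e' i)
    simp only [List.get_eq_getElem, Fin.coe_cast, List.getElem_ofFn] at this
    show a (Fin.cast hmn.symm i) = ↑(G (Fin.cast e i.castSucc))⁻¹ * b i * ↑(G (Fin.cast e i.succ))
    rw [show Fin.cast e i.castSucc = (Fin.cast e' i).castSucc from Fin.ext (by simp),
      show Fin.cast e i.succ = (Fin.cast e' i).succ from Fin.ext (by simp)]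
    convert this using 2
    exact Fin.ext (by simp)
end

section
/- A monoid S is isomorphic to the free monoid on some nonempty set if and only if S is a Levi monoid whose group of units is trivial (the identity is the only unit of S). -/
section Aux

variable {S : Type*} [Monoid S]

/-- Irreducible (atomic) elements. -/
def LeviAtom (a : S) : Prop := a ≠ 1 ∧ ∀ b c : S, a = b * c → b = 1 ∨ c = 1

lemma freeMonoid_unit_eq_one {X : Type*} (w : FreeMonoid X) (h : IsUnit w) : w = 1 := by
  rcases h with ⟨u, rfl⟩
  have h1 : (u : FreeMonoid X) * ↑u⁻¹ = 1 := u.mul_inv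
  have h2 := congrArg FreeMonoid.toList h1
  rw [FreeMonoid.toList_mul] at h2
  have h3 : FreeMonoid.toList (u : FreeMonoid X) = [] := by
    have := List.append_eq_nil_iff.mp (by simpa using h2)
    exact this.1
  apply FreeMonoid.toList.injective
  simpa using h3

end Aux

/-- A monoid is free on some nonempty set iff it is a Levi monoid with trivial
group of units. -/
theorem stmt6 {S : Type u} [Monoid S] :
    (∃ (X : Type u) (_ : Nonempty X), Nonempty (S ≃* FreeMonoid X)) ↔
    (IsLeviMonoid S ∧ ∀ a : S, IsUnit a → a = 1) := by
  constructor
  · rintro ⟨X, ⟨x⟩, ⟨e⟩⟩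
    -- units of S are trivial
    have htriv : ∀ a : S, IsUnit a → a = 1 := by
      intro a ha
      have : e a = 1 := freeMonoid_unit_eq_one _ (ha.map e)
      apply e.injective
      simpa using this
    refine ⟨⟨?_, ⟨fun s => (e s).toList.length, ?_, ?_⟩, ?_⟩, htriv⟩
    · -- equidivisible
      intro a b c d h
      have h' : (e a).toList ++ (e b).toList = (e c).toList ++ (e d).toList := by
        rw [← FreeMonoid.toList_mul, ← FreeMonoid.toList_mul, ← map_mul, ← map_mul, h]
      rcases List.append_eq_append_iff.mp h' with ⟨w, hw1, hw2⟩ | ⟨w, hw1, hw2⟩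
      · right
        refine ⟨e.symm (FreeMonoid.toList.symm w), ?_, ?_⟩
        · apply e.injective
          rw [map_mul, MulEquiv.apply_symm_apply]
          apply FreeMonoid.toList.injective
          rw [FreeMonoid.toList_mul, hw1]; simp
        · apply e.injective
          rw [map_mul, MulEquiv.apply_symm_apply]
          apply FreeMonoid.toList.injective
          rw [FreeMonoid.toList_mul, hw2]; simp
      · left
        refine ⟨e.symm (FreeMonoid.toList.symm w), ?_, ?_⟩
        · apply e.injective
          rw [map_mul, MulEquiv.apply_symm_apply]
          apply FreeMonoid.toList.injective
          rw [FreeMonoid.toList_mul, hw1]; simp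
        · apply e.injective
          rw [map_mul, MulEquiv.apply_symm_apply]
          apply FreeMonoid.toList.injective
          rw [FreeMonoid.toList_mul, hw2]; simp
    · -- additivity of the length
      intro a b
      simp only [map_mul, FreeMonoid.toList_mul, List.length_append]
    · -- zero set = units
      intro a
      constructor
      · intro h
        have h1 : (e a).toList = [] := List.length_eq_zero_iff.mp h
        have h2 : e a = 1 := by
          apply FreeMonoid.toList.injective; simpa using h1
        have : a = 1 := by apply e.injective; simpa using h2
        exact this ▸ isUnit_one
      · intro h
        have : a = 1 := htriv a h
        subst this
        simp
    · -- a non-unit exists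
      refine ⟨e.symm (FreeMonoid.of x), fun h => ?_⟩
      have h1 : e (e.symm (FreeMonoid.of x)) = 1 :=
        freeMonoid_unit_eq_one _ (h.map e)
      rw [MulEquiv.apply_symm_apply] at h1
      have := congrArg FreeMonoid.toList h1
      simp [FreeMonoid.toList_of] at this
  · rintro ⟨⟨heq, ⟨l, hmul, hzero⟩, ⟨a0, ha0⟩⟩, htriv⟩
    classical
    -- l a = 0 ↔ a = 1
    have hone : ∀ a : S, l a = 0 ↔ a = 1 := by
      intro a
      constructor
      · intro h; exact htriv a ((hzero a).mp h)
      · rintro rfl; exact (hzero 1).mpr isUnit_one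
    set A := {x : S // LeviAtom x} with hA
    -- existence of factorizations into atoms
    have exist : ∀ n : ℕ, ∀ a : S, l a ≤ n →
        ∃ L : List A, (L.map Subtype.val).prod = a := by
      intro n
      induction n with
      | zero =>
        intro a ha
        have : a = 1 := (hone a).mp (Nat.le_zero.mp ha)
        exact ⟨[], by simp [this]⟩
      | succ n ih =>
        intro a ha
        by_cases h1 : a = 1
        · exact ⟨[], by simp [h1]⟩
        by_cases hatom : LeviAtom a
        · exact ⟨[⟨a, hatom⟩], by simp⟩
        · have : ∃ b c : S, a = b * c ∧ b ≠ 1 ∧ c ≠ 1 := by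
            unfold LeviAtom at hatom
            push_neg at hatom
            obtain ⟨b, c, h2, h3, h4⟩ := hatom h1
            exact ⟨b, c, h2, h3, h4⟩
          obtain ⟨b, c, rfl, hb, hc⟩ := this
          have hlb : 1 ≤ l b := Nat.one_le_iff_ne_zero.mpr (fun h => hb ((hone b).mp h))
          have hlc : 1 ≤ l c := Nat.one_le_iff_ne_zero.mpr (fun h => hc ((hone c).mp h))
          have hsum : l b + l c ≤ n + 1 := by rw [← hmul]; exact ha
          obtain ⟨Lb, hLb⟩ := ih b (by omega)
          obtain ⟨Lc, hLc⟩ := ih c (by omega)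
          exact ⟨Lb ++ Lc, by rw [List.map_append, List.prod_append, hLb, hLc]⟩
    -- a nonempty product of atoms is ≠ 1
    have prod_ne_one : ∀ (y : A) (M : List A),
        (((y :: M).map Subtype.val).prod : S) ≠ 1 := by
      intro y M h
      have h1 : l ((y :: M).map Subtype.val).prod = 0 := by rw [h]; exact (hone 1).mpr rfl
      rw [List.map_cons, List.prod_cons, hmul] at h1
      have : l y.val = 0 := by omega
      exact y.2.1 ((hone _).mp this)
    -- uniqueness of factorizations
    have uniq : ∀ L M : List A,
        ((L.map Subtype.val).prod : S) = (M.map Subtype.val).prod → L = M := by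
      intro L
      induction L with
      | nil =>
        intro M h
        cases M with
        | nil => rfl
        | cons y M' => exact absurd h.symm (prod_ne_one y M')
      | cons x L' ih =>
        intro M h
        cases M with
        | nil => exact absurd h (prod_ne_one x L')
        | cons y M' =>
          simp only [List.map_cons, List.prod_cons] at h
          have key : (x : S) = y ∧ ((L'.map Subtype.val).prod : S)
              = (M'.map Subtype.val).prod := by
            rcases heq _ _ _ _ h with ⟨w, hw1, hw2⟩ | ⟨w, hw1, hw2⟩
            · rcases x.2.2 _ _ hw1 with h' | h'
              · exact absurd h' y.2.1
              · subst h'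
                rw [mul_one] at hw1
                rw [one_mul] at hw2
                exact ⟨hw1, hw2.symm⟩
            · rcases y.2.2 _ _ hw1 with h' | h'
              · exact absurd h' x.2.1
              · subst h'
                rw [mul_one] at hw1
                rw [one_mul] at hw2
                exact ⟨hw1.symm, hw2⟩
          obtain ⟨h1, h2⟩ := key
          have := ih M' h2
          rw [this, Subtype.ext h1]
    -- the lift map
    let f : FreeMonoid A →* S := FreeMonoid.lift Subtype.val
    have hinj : Function.Injective f := by
      intro w1 w2 h
      rw [FreeMonoid.lift_apply, FreeMonoid.lift_apply] at h
      have := uniq _ _ h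
      exact FreeMonoid.toList.injective this
    have hsurj : Function.Surjective f := by
      intro a
      obtain ⟨L, hL⟩ := exist (l a) a le_rfl
      exact ⟨FreeMonoid.toList.symm L, by rw [FreeMonoid.lift_apply]; exact hL⟩
    -- A is nonempty
    have hA1 : a0 ≠ 1 := fun h => ha0 (h ▸ isUnit_one)
    obtain ⟨L0, hL0⟩ := exist (l a0) a0 le_rfl
    have hAne : Nonempty A := by
      cases L0 with
      | nil => exact absurd hL0.symm (by simpa using hA1)
      | cons z _ => exact ⟨z⟩
    exact ⟨A, hAne, ⟨(MulEquiv.ofBijective f ⟨hinj, hsurj⟩).symm⟩⟩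
end

section
/- Let S be a Levi monoid. Then: (i) S is left cancellative if and only if for every atom x of S and every unit g, xg = x implies g = 1; (ii) S is right cancellative if and only if for every atom x of S and every unit g, gx = x implies g = 1; (iii) S is cancellative if and only if both conditions in (i) and (ii) hold. -/
theorem stmt7 {S : Type*} [Monoid S] (hS : IsLeviMonoid S) :
    ((∀ a b c : S, a * b = a * c → b = c) ↔
      ∀ x g : S, IsMonoidAtom x → IsUnit g → x * g = x → g = 1) ∧
    ((∀ a b c : S, b * a = c * a → b = c) ↔
      ∀ x g : S, IsMonoidAtom x → IsUnit g → g * x = x → g = 1) ∧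
    (((∀ a b c : S, a * b = a * c → b = c) ∧ (∀ a b c : S, b * a = c * a → b = c)) ↔
      ((∀ x g : S, IsMonoidAtom x → IsUnit g → x * g = x → g = 1) ∧
        ∀ x g : S, IsMonoidAtom x → IsUnit g → g * x = x → g = 1)) := by
  obtain ⟨heq, ⟨l, hl1, hl2⟩, -⟩ := hS
  have hnu : ∀ a : S, ¬IsUnit a → 0 < l a := fun a ha =>
    Nat.pos_of_ne_zero fun h => ha ((hl2 a).mp h)
  -- split a non-unit non-atom
  have hsplit : ∀ a : S, ¬IsUnit a → ¬IsMonoidAtom a →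
      ∃ p q : S, a = p * q ∧ ¬IsUnit p ∧ ¬IsUnit q := by
    intro a hu hat
    by_contra hcon
    push_neg at hcon
    refine hat ⟨hu, fun b c hbc => ?_⟩
    by_contra h2
    push_neg at h2
    exact h2.2 (hcon b c hbc h2.1)
  have left : (∀ x g : S, IsMonoidAtom x → IsUnit g → x * g = x → g = 1) →
      ∀ a b c : S, a * b = a * c → b = c := by
    intro hx
    have key : ∀ n : ℕ, ∀ a b c : S, l a ≤ n → a * b = a * c → b = c := by
      intro n
      induction n with
      | zero =>
        intro a b c hla h
        exact ((hl2 a).mp (Nat.le_zero.mp hla)).mul_left_cancel h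
      | succ n ih =>
        intro a b c hla h
        by_cases hu : IsUnit a
        · exact hu.mul_left_cancel h
        by_cases hat : IsMonoidAtom a
        · rcases heq a b a c h with ⟨u, hau, hc⟩ | ⟨v, hav, hb⟩
          · have hu' : IsUnit u := by
              have h1 := hl1 a u
              rw [← hau] at h1
              exact (hl2 u).mp (by omega)
            rw [hc, hx a u hat hu' hau.symm, one_mul]
          · have hv' : IsUnit v := by
              have h1 := hl1 a v
              rw [← hav] at h1
              exact (hl2 v).mp (by omega)
            rw [hb, hx a v hat hv' hav.symm, one_mul]
        · obtain ⟨p, q, hpq, hp, hq⟩ := hsplit a hu hat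
          have hla' : l p + l q ≤ n + 1 := by rw [← hl1, ← hpq]; exact hla
          have hp' := hnu p hp
          have hq' := hnu q hq
          rw [hpq, mul_assoc, mul_assoc] at h
          have h1 : q * b = q * c := ih p (q * b) (q * c) (by omega) h
          exact ih q b c (by omega) h1
    exact fun a b c => key (l a) a b c le_rfl
  have right : (∀ x g : S, IsMonoidAtom x → IsUnit g → g * x = x → g = 1) →
      ∀ a b c : S, b * a = c * a → b = c := by
    intro hx
    have key : ∀ n : ℕ, ∀ a b c : S, l a ≤ n → b * a = c * a → b = c := by
      intro n
      induction n with
      | zero =>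
        intro a b c hla h
        exact ((hl2 a).mp (Nat.le_zero.mp hla)).mul_right_cancel h
      | succ n ih =>
        intro a b c hla h
        by_cases hu : IsUnit a
        · exact hu.mul_right_cancel h
        by_cases hat : IsMonoidAtom a
        · rcases heq b a c a h with ⟨u, hb, hau⟩ | ⟨v, hc, hav⟩
          · have hu' : IsUnit u := by
              have h1 := hl1 u a
              rw [← hau] at h1
              exact (hl2 u).mp (by omega)
            rw [hb, hx a u hat hu' hau.symm, mul_one]
          · have hv' : IsUnit v := by
              have h1 := hl1 v a
              rw [← hav] at h1
              exact (hl2 v).mp (by omega)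
            rw [hc, hx a v hat hv' hav.symm, mul_one]
        · obtain ⟨p, q, hpq, hp, hq⟩ := hsplit a hu hat
          have hla' : l p + l q ≤ n + 1 := by rw [← hl1, ← hpq]; exact hla
          have hp' := hnu p hp
          have hq' := hnu q hq
          rw [hpq, ← mul_assoc, ← mul_assoc] at h
          have h1 : b * p = c * p := ih q (b * p) (c * p) (by omega) h
          exact ih p b c (by omega) h1
    exact fun a b c => key (l a) a b c le_rfl
  have l1 : (∀ a b c : S, a * b = a * c → b = c) ↔
      ∀ x g : S, IsMonoidAtom x → IsUnit g → x * g = x → g = 1 :=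
    ⟨fun hc x g _ _ hxg => hc x g 1 (by rw [hxg, mul_one]), left⟩
  have l2 : (∀ a b c : S, b * a = c * a → b = c) ↔
      ∀ x g : S, IsMonoidAtom x → IsUnit g → g * x = x → g = 1 :=
    ⟨fun hc x g _ _ hgx => hc x g 1 (by rw [hgx, one_mul]), right⟩
  exact ⟨l1, l2, and_congr l1 l2⟩
end

section
/- A left cancellative monoid S is right rigid if and only if it is equidivisible. -/
/-- A left cancellative monoid is right rigid (any two intersecting principal
right ideals are comparable) iff it is equidivisible. -/
theorem stmt8 {S : Type*} [Monoid S]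
    (hlc : ∀ a b c : S, a * b = a * c → b = c) :
    (∀ a b : S, (rIdeal a ∩ rIdeal b).Nonempty →
      rIdeal a ⊆ rIdeal b ∨ rIdeal b ⊆ rIdeal a) ↔ Equidivisible S := by
  constructor
  · intro hrig a b c d hab
    have hne : (rIdeal a ∩ rIdeal c).Nonempty :=
      ⟨a * b, ⟨b, rfl⟩, ⟨d, hab.symm⟩⟩
    rcases hrig a c hne with h | h
    · rcases h ⟨1, rfl⟩ with ⟨u, hu⟩
      have ha : a = c * u := by simpa using hu.symm
      left
      refine ⟨u, ha, hlc c _ _ ?_⟩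
      rw [← mul_assoc, ← ha, hab]
    · rcases h ⟨1, rfl⟩ with ⟨v, hv⟩
      have hc : c = a * v := by simpa using hv.symm
      right
      refine ⟨v, hc, hlc a _ _ ?_⟩
      rw [← mul_assoc, ← hc, ← hab]
  · intro heq a b hne
    rcases hne with ⟨x, ⟨p, hp⟩, ⟨q, hq⟩⟩
    simp only [] at hp hq
    have h : a * p = b * q := by rw [hp, hq]
    rcases heq a p b q h with ⟨u, hu, -⟩ | ⟨v, hv, -⟩
    · left
      rintro y ⟨s, rfl⟩
      exact ⟨u * s, by simp [hu, mul_assoc]⟩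
    · right
      rintro y ⟨s, rfl⟩
      exact ⟨v * s, by simp [hv, mul_assoc]⟩
end

section
/- Let S be a Levi monoid and let a ∈ S. Then the principal two-sided ideal SaS is a maximal element of the set of proper principal two-sided ideals of S (ordered by inclusion) if and only if a is an atom. -/
theorem stmt9 {S : Type*} [Monoid S] (hS : IsLeviMonoid S) (a : S) :
    (tIdeal a ≠ Set.univ ∧
      ∀ b : S, tIdeal a ⊆ tIdeal b → tIdeal b ≠ Set.univ → tIdeal a = tIdeal b) ↔
    IsMonoidAtom a := by
  obtain ⟨-, ⟨l, hadd, hzero⟩, -⟩ := hS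
  -- if x is a unit, tIdeal x = univ
  have hunit_univ : ∀ x : S, IsUnit x → tIdeal x = Set.univ := by
    intro x hx
    obtain ⟨u, rfl⟩ := hx
    ext y
    simp only [Set.mem_univ, iff_true]
    exact ⟨y * ↑u⁻¹, 1, by simp⟩
  -- if x is not a unit, tIdeal x ≠ univ
  have huniv_ne : ∀ x : S, ¬IsUnit x → tIdeal x ≠ Set.univ := by
    intro x hx h
    have h1 : (1 : S) ∈ tIdeal x := h ▸ Set.mem_univ 1
    obtain ⟨s, t, hst⟩ := h1
    have hl : l s + l x + l t = 0 := by
      rw [← hadd, ← hadd, ← hst, hzero]; exact isUnit_one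
    exact hx ((hzero x).1 (by omega))
  constructor
  · rintro ⟨hne, hmax⟩
    refine ⟨fun hx => hne (hunit_univ a hx), ?_⟩
    intro b c habc
    by_contra h
    push_neg at h
    obtain ⟨hb, hc⟩ := h
    have hsub : tIdeal a ⊆ tIdeal b := by
      rintro x ⟨s, t, rfl⟩
      exact ⟨s, c * t, by rw [habc]; rw [mul_assoc, mul_assoc, mul_assoc]⟩
    have heq := hmax b hsub (huniv_ne b hb)
    have hbmem : b ∈ tIdeal a := heq ▸ ⟨1, 1, by simp⟩
    obtain ⟨s, t, hst⟩ := hbmem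
    have : l b = l s + (l b + l c) + l t := by
      rw [← hadd, ← hadd, ← habc, ← hadd, ← hst]
    have hlc : l c = 0 := by omega
    exact hc ((hzero c).1 hlc)
  · rintro ⟨hna, hatom⟩
    refine ⟨huniv_ne a hna, ?_⟩
    intro b hsub hbne
    have hamem : a ∈ tIdeal b := hsub ⟨1, 1, by simp⟩
    obtain ⟨s, t, hst⟩ := hamem
    have hb : ¬IsUnit b := fun h => hbne (hunit_univ b h)
    -- a = (s*b)*t : atom gives IsUnit (s*b) or IsUnit t
    have h1 := hatom (s * b) t hst
    have ht : IsUnit t := by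
      rcases h1 with h | h
      · exfalso
        have : l s + l b = 0 := by rw [← hadd, hzero]; exact h
        exact hb ((hzero b).1 (by omega))
      · exact h
    have h2 := hatom s (b * t) (by rw [hst, mul_assoc])
    have hs : IsUnit s := by
      rcases h2 with h | h
      · exact h
      · exfalso
        have : l b + l t = 0 := by rw [← hadd, hzero]; exact h
        exact hb ((hzero b).1 (by omega))
    obtain ⟨u, rfl⟩ := hs
    obtain ⟨v, rfl⟩ := ht
    apply Set.Subset.antisymm hsub
    rintro x ⟨p, q, rfl⟩
    refine ⟨p * ↑u⁻¹, ↑v⁻¹ * q, ?_⟩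
    have hb' : b = ↑u⁻¹ * a * ↑v⁻¹ := by
      rw [hst]
      simp [mul_assoc]
    rw [hb']
    simp [mul_assoc]
end

section
/- Let S be a Levi monoid. Then S has a maximum proper principal two-sided ideal (a proper principal two-sided ideal containing every proper principal two-sided ideal of S) if and only if S is irreducible, i.e. for any two atoms x, y of S there exist units g, h with y = gxh. -/
/-- A Levi monoid has a maximum proper principal two-sided ideal iff it is
irreducible: any two atoms differ by units on both sides. -/
theorem stmt10 {S : Type*} [Monoid S] (hS : IsLeviMonoid S) :
    (∃ a : S, tIdeal a ≠ Set.univ ∧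
      ∀ b : S, tIdeal b ≠ Set.univ → tIdeal b ⊆ tIdeal a) ↔
    (∀ x y : S, IsMonoidAtom x → IsMonoidAtom y →
      ∃ g h : S, IsUnit g ∧ IsUnit h ∧ y = g * x * h) := by
  obtain ⟨-, ⟨l, hl1, hl2⟩, a0, ha0⟩ := hS
  have lone : l 1 = 0 := by have h := hl1 1 1; rw [one_mul] at h; omega
  -- properness of tIdeal a ↔ a is not a unit
  have proper : ∀ a : S, tIdeal a ≠ Set.univ ↔ ¬IsUnit a := by
    intro a
    constructor
    · intro hprop hu
      apply hprop
      obtain ⟨u, rfl⟩ := hu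
      ext x
      simp only [Set.mem_univ, iff_true]
      exact ⟨x * ↑u⁻¹, 1, by simp [mul_assoc]⟩
    · intro hu hupr
      have h1 : (1 : S) ∈ tIdeal a := hupr ▸ Set.mem_univ 1
      obtain ⟨s, t, hst⟩ := h1
      have : l (s * a * t) = l s + l a + l t := by rw [hl1, hl1]
      rw [← hst, lone] at this
      exact hu ((hl2 a).mp (by omega))
  constructor
  · rintro ⟨a, hprop, hmax⟩ x y hx hy
    have ha : ¬IsUnit a := (proper a).mp hprop
    -- every atom z equals s * a * t with s, t units
    have key : ∀ z : S, IsMonoidAtom z →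
        ∃ us ut : Sˣ, z = ↑us * a * ↑ut := by
      intro z hz
      have hzmem : z ∈ tIdeal a :=
        hmax z ((proper z).mpr hz.1) ⟨1, 1, by simp⟩
      obtain ⟨s, t, hst⟩ := hzmem
      have hs : IsUnit s := by
        rcases hz.2 s (a * t) (by rw [hst, mul_assoc]) with h | h
        · exact h
        · exfalso
          have := (hl2 (a * t)).mpr h
          rw [hl1] at this
          exact ha ((hl2 a).mp (by omega))
      have ht : IsUnit t := by
        rcases hz.2 (s * a) t hst with h | h
        · exfalso
          have := (hl2 (s * a)).mpr h
          rw [hl1] at this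
          exact ha ((hl2 a).mp (by omega))
        · exact h
      obtain ⟨us, rfl⟩ := hs
      obtain ⟨ut, rfl⟩ := ht
      exact ⟨us, ut, hst⟩
    obtain ⟨us, ut, hxe⟩ := key x hx
    obtain ⟨us', ut', hye⟩ := key y hy
    refine ⟨↑us' * ↑us⁻¹, ↑ut⁻¹ * ↑ut', (us' * us⁻¹).isUnit, (ut⁻¹ * ut').isUnit, ?_⟩
    have ha' : a = ↑us⁻¹ * x * ↑ut⁻¹ := by rw [hxe]; simp [mul_assoc]
    rw [hye, ha']
    simp [mul_assoc]
  · intro hirr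
    -- find an atom p of minimal length among non-units
    have hne : {n | ∃ b : S, ¬IsUnit b ∧ l b = n}.Nonempty := ⟨l a0, a0, ha0, rfl⟩
    obtain ⟨p, hpnu, hlp⟩ := Nat.sInf_mem hne
    have hmin : ∀ b : S, ¬IsUnit b → l p ≤ l b := by
      intro b hb
      rw [hlp]
      exact Nat.sInf_le ⟨b, hb, rfl⟩
    have hpatom : IsMonoidAtom p := by
      refine ⟨hpnu, ?_⟩
      intro b c hbc
      by_contra hcon
      push_neg at hcon
      obtain ⟨hb, hc⟩ := hcon
      have h1 : l p = l b + l c := by rw [hbc, hl1]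
      have h2 : l p ≤ l b := hmin b hb
      have h3 : l c ≠ 0 := fun h => hc ((hl2 c).mp h)
      omega
    -- every non-unit lies in tIdeal p
    have key : ∀ n : ℕ, ∀ b : S, l b = n → ¬IsUnit b → ∃ s t : S, b = s * p * t := by
      intro n
      induction n using Nat.strong_induction_on with
      | _ n ih =>
        intro b hlb hb
        by_cases hatom : IsMonoidAtom b
        · obtain ⟨g, h, _, _, hgh⟩ := hirr p b hpatom hatom
          exact ⟨g, h, hgh⟩
        · unfold IsMonoidAtom at hatom
          push_neg at hatom
          obtain ⟨c, d, hcd, hc, hd⟩ := hatom hb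
          have hld : l d ≠ 0 := fun h => hd ((hl2 d).mp h)
          have hsum : n = l c + l d := by rw [← hlb, hcd, hl1]
          obtain ⟨s, t, rfl⟩ := ih (l c) (by omega) c rfl hc
          exact ⟨s, t * d, by rw [hcd, mul_assoc]⟩
    refine ⟨p, (proper p).mpr hpnu, ?_⟩
    intro b hb x hxb
    obtain ⟨s, t, hst⟩ := hxb
    obtain ⟨s', t', hb'⟩ := key (l b) b rfl ((proper b).mp hb)
    exact ⟨s * s', t' * t, by rw [hst, hb']; simp [mul_assoc]⟩
end

section
/- Let S be a left Rees monoid. Then the following are equivalent: (i) S has a maximum proper principal left ideal, i.e. a proper principal left ideal containing every proper principal left ideal of S; (ii) the partially ordered set of principal left ideals of S under inclusion is an infinite descending chain order-isomorphic to the natural numbers with their reverse order; (iii) S is right reversible, i.e. Sa ∩ Sb ≠ ∅ for all a, b ∈ S. -/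
/-- A left Rees monoid: a left cancellative Levi monoid. -/
def IsLeftReesMonoid (S : Type*) [Monoid S] : Prop :=
  (∀ a b c : S, a * b = a * c → b = c) ∧ IsLeviMonoid S

section Aux

variable {S : Type*} [Monoid S]

lemma self_mem_lIdeal (a : S) : a ∈ lIdeal a := ⟨1, one_mul a⟩

lemma lIdeal_subset_iff {a b : S} : lIdeal b ⊆ lIdeal a ↔ ∃ s, b = s * a := by
  constructor
  · intro h
    obtain ⟨s, hs⟩ := h (self_mem_lIdeal b)
    exact ⟨s, hs.symm⟩
  · rintro ⟨s, rfl⟩ x ⟨t, rfl⟩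
    exact ⟨t * s, show t * s * a = t * (s * a) from mul_assoc t s a⟩

lemma length_one {l : S → ℕ} (hl : IsLengthFunction l) : l 1 = 0 :=
  (hl.2 1).mpr isUnit_one

lemma length_pow {l : S → ℕ} (hl : IsLengthFunction l) (m : S) (n : ℕ) :
    l (m ^ n) = n * l m := by
  induction n with
  | zero => simpa using length_one hl
  | succ k ih => rw [pow_succ, hl.1, ih]; ring

lemma lIdeal_eq_univ_iff {l : S → ℕ} (hl : IsLengthFunction l) {a : S} :
    lIdeal a = Set.univ ↔ IsUnit a := by
  constructor
  · intro h
    have h1 : (1 : S) ∈ lIdeal a := h ▸ Set.mem_univ 1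
    obtain ⟨s, hs⟩ := h1
    have hs' : s * a = 1 := hs
    have h2 := hl.1 s a
    rw [hs', length_one hl] at h2
    exact (hl.2 a).mp (by omega)
  · rintro ⟨u, rfl⟩
    ext x
    simp only [Set.mem_univ, iff_true]
    exact ⟨x * ↑u⁻¹, by simp [lIdeal, mul_assoc]⟩

lemma classify {l : S → ℕ} (hl : IsLengthFunction l) {m : S}
    (hm : lIdeal m ≠ Set.univ)
    (hmax : ∀ b : S, lIdeal b ≠ Set.univ → lIdeal b ⊆ lIdeal m)
    (a : S) : ∃ n : ℕ, lIdeal a = lIdeal (m ^ n) := by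
  have hlm : l m ≠ 0 := fun h => hm ((lIdeal_eq_univ_iff hl).mpr ((hl.2 m).mp h))
  suffices H : ∀ N : ℕ, ∀ a : S, l a ≤ N → ∃ n, lIdeal a = lIdeal (m ^ n) from
    H (l a) a le_rfl
  intro N
  induction N with
  | zero =>
    intro a ha
    exact ⟨0, by rw [pow_zero, (lIdeal_eq_univ_iff hl).mpr ((hl.2 a).mp (Nat.le_zero.mp ha)),
      (lIdeal_eq_univ_iff hl).mpr isUnit_one]⟩
  | succ N ih =>
    intro a ha
    by_cases hu : IsUnit a
    · exact ⟨0, by rw [pow_zero, (lIdeal_eq_univ_iff hl).mpr hu,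
        (lIdeal_eq_univ_iff hl).mpr isUnit_one]⟩
    · have haU : lIdeal a ≠ Set.univ := fun h => hu ((lIdeal_eq_univ_iff hl).mp h)
      obtain ⟨s, hs⟩ := lIdeal_subset_iff.mp (hmax a haU)
      have hls : l s ≤ N := by
        have h2 := congrArg l hs
        rw [hl.1] at h2
        omega
      obtain ⟨k, hk⟩ := ih s hls
      obtain ⟨t, ht⟩ := lIdeal_subset_iff.mp hk.subset
      obtain ⟨r, hr⟩ := lIdeal_subset_iff.mp hk.superset
      refine ⟨k + 1, Set.Subset.antisymm ?_ ?_⟩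
      · exact lIdeal_subset_iff.mpr ⟨t, by rw [hs, ht, pow_succ, mul_assoc]⟩
      · exact lIdeal_subset_iff.mpr ⟨r, by rw [pow_succ, hr, hs, mul_assoc]⟩

lemma pow_ideal_le {l : S → ℕ} (hl : IsLengthFunction l) {m : S} (hm : l m ≠ 0)
    {n k : ℕ} : lIdeal (m ^ n) ⊆ lIdeal (m ^ k) ↔ k ≤ n := by
  constructor
  · intro h
    obtain ⟨s, hs⟩ := lIdeal_subset_iff.mp h
    have h1 := congrArg l hs
    rw [length_pow hl, hl.1, length_pow hl] at h1
    have h2 : k * l m ≤ n * l m := by rw [h1]; exact Nat.le_add_left _ _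
    exact Nat.le_of_mul_le_mul_right h2 (Nat.pos_of_ne_zero hm)
  · intro h
    refine lIdeal_subset_iff.mpr ⟨m ^ (n - k), ?_⟩
    rw [← pow_add]
    congr 1
    omega

end Aux

theorem stmt14 {S : Type*} [Monoid S] (hS : IsLeftReesMonoid S) :
    ((∃ a : S, lIdeal a ≠ Set.univ ∧
        ∀ b : S, lIdeal b ≠ Set.univ → lIdeal b ⊆ lIdeal a) ↔
      Nonempty ({T : Set S // ∃ a : S, T = lIdeal a} ≃o ℕᵒᵈ)) ∧
    (Nonempty ({T : Set S // ∃ a : S, T = lIdeal a} ≃o ℕᵒᵈ) ↔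
      ∀ a b : S, (lIdeal a ∩ lIdeal b).Nonempty) := by
  obtain ⟨hcancel, hequi, ⟨l, hl⟩, a0, ha0⟩ := hS
  -- (i) → (ii)
  have h12 : (∃ a : S, lIdeal a ≠ Set.univ ∧
      ∀ b : S, lIdeal b ≠ Set.univ → lIdeal b ⊆ lIdeal a) →
      Nonempty ({T : Set S // ∃ a : S, T = lIdeal a} ≃o ℕᵒᵈ) := by
    rintro ⟨m, hm, hmax⟩
    have hlm : l m ≠ 0 := fun h => hm ((lIdeal_eq_univ_iff hl).mpr ((hl.2 m).mp h))
    have hinj : ∀ n k : ℕ, lIdeal (m ^ n) = lIdeal (m ^ k) → n = k := by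
      intro n k h
      have h1 := (pow_ideal_le hl hlm).mp h.subset
      have h2 := (pow_ideal_le hl hlm).mp h.superset
      omega
    let F : ℕᵒᵈ → {T : Set S // ∃ a : S, T = lIdeal a} :=
      fun n => ⟨lIdeal (m ^ OrderDual.ofDual n), m ^ OrderDual.ofDual n, rfl⟩
    have hbij : Function.Bijective F := by
      constructor
      · intro n k h
        exact hinj _ _ (congrArg Subtype.val h)
      · rintro ⟨T, a, rfl⟩
        obtain ⟨n, hn⟩ := classify hl hm hmax a
        exact ⟨OrderDual.toDual n, Subtype.ext hn.symm⟩
    refine ⟨OrderIso.symm ⟨Equiv.ofBijective F hbij, ?_⟩⟩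
    intro n k
    show lIdeal (m ^ OrderDual.ofDual n) ⊆ lIdeal (m ^ OrderDual.ofDual k) ↔ n ≤ k
    exact pow_ideal_le hl hlm
  -- (ii) → (iii)
  have h23 : Nonempty ({T : Set S // ∃ a : S, T = lIdeal a} ≃o ℕᵒᵈ) →
      ∀ a b : S, (lIdeal a ∩ lIdeal b).Nonempty := by
    rintro ⟨e⟩ a b
    rcases le_total (e ⟨lIdeal a, a, rfl⟩) (e ⟨lIdeal b, b, rfl⟩) with h | h
    · have h' : lIdeal a ⊆ lIdeal b := e.le_iff_le.mp h
      exact ⟨a, self_mem_lIdeal a, h' (self_mem_lIdeal a)⟩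
    · have h' : lIdeal b ⊆ lIdeal a := e.le_iff_le.mp h
      exact ⟨b, h' (self_mem_lIdeal b), self_mem_lIdeal b⟩
  -- (iii) → (i)
  have h31 : (∀ a b : S, (lIdeal a ∩ lIdeal b).Nonempty) →
      ∃ a : S, lIdeal a ≠ Set.univ ∧
        ∀ b : S, lIdeal b ≠ Set.univ → lIdeal b ⊆ lIdeal a := by
    intro hrev
    classical
    have key : ∃ n : ℕ, ∃ a : S, ¬IsUnit a ∧ l a = n := ⟨l a0, a0, ha0, rfl⟩
    obtain ⟨m, hmU, hmla⟩ := Nat.find_spec key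
    have hmmin : ∀ b : S, ¬IsUnit b → l m ≤ l b := by
      intro b hb
      rw [hmla]
      exact Nat.find_min' key ⟨b, hb, rfl⟩
    refine ⟨m, fun h => hmU ((lIdeal_eq_univ_iff hl).mp h), ?_⟩
    intro b hb
    have hbU : ¬IsUnit b := fun h => hb ((lIdeal_eq_univ_iff hl).mpr h)
    obtain ⟨x, ⟨s, hs⟩, ⟨t, ht⟩⟩ := hrev m b
    have heq : s * m = t * b := hs.trans ht.symm
    rcases hequi s m t b heq with ⟨u, _, hu2⟩ | ⟨v, _, hv2⟩
    · exact lIdeal_subset_iff.mpr ⟨u, hu2⟩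
    · have h1 := congrArg l hv2
      rw [hl.1] at h1
      have h2 := hmmin b hbU
      have hv0 : l v = 0 := by omega
      obtain ⟨vu, rfl⟩ := (hl.2 v).mp hv0
      refine lIdeal_subset_iff.mpr ⟨↑vu⁻¹, ?_⟩
      rw [hv2, ← mul_assoc]
      simp
  exact ⟨⟨h12, fun h => h31 (h23 h)⟩, ⟨h23, fun h => h12 (h31 h)⟩⟩
end

section
/- Let G be a group and α : G → G an endomorphism of G. Equip the set ℕ × G with the product (m,g)(n,h) = (m+n, α^n(g)h). Then ℕ × G with this product is a left Rees monoid in which the partially ordered set of principal right ideals under inclusion is an infinite descending chain order-isomorphic to the natural numbers with their reverse order. Conversely, every left Rees monoid whose partially ordered set of principal right ideals is an infinite descending chain order-isomorphic to the natural numbers with their reverse order is isomorphic as a monoid to one constructed in this way from some group G and endomorphism α of G. -/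
/-- The set `ℕ × G`, as a carrier for the Rees product `ℕ ∗_α G`. -/
structure ReesProd (G : Type*) [Group G] (α : G →* G) where
  n : ℕ
  g : G

/-- The Rees product: multiplication `(m,g)(n,h) = (m+n, α^n(g)h)`. -/
instance ReesProd.instMonoid {G : Type*} [Group G] (α : G →* G) :
    Monoid (ReesProd G α) where
  mul p q := ⟨p.n + q.n, (⇑α)^[q.n] p.g * q.g⟩
  one := ⟨0, 1⟩
  one_mul p := by
    show (⟨0 + p.n, (⇑α)^[p.n] (1 : G) * p.g⟩ : ReesProd G α) = p
    simp [iterate_map_one]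
  mul_one p := by
    show (⟨p.n + 0, (⇑α)^[0] p.g * 1⟩ : ReesProd G α) = p
    simp
  mul_assoc p q r := by
    show (⟨(p.n + q.n) + r.n, (⇑α)^[r.n] ((⇑α)^[q.n] p.g * q.g) * r.g⟩ : ReesProd G α) =
      ⟨p.n + (q.n + r.n), (⇑α)^[q.n + r.n] p.g * ((⇑α)^[r.n] q.g * r.g)⟩
    simp only [ReesProd.mk.injEq]
    refine ⟨add_assoc _ _ _, ?_⟩
    rw [iterate_map_mul, add_comm q.n r.n, Function.iterate_add_apply, mul_assoc]


section Aux

variable {G : Type*} [Group G] {α : G →* G}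

lemma ReesProd.mul_def (p q : ReesProd G α) :
    p * q = ⟨p.n + q.n, (⇑α)^[q.n] p.g * q.g⟩ := rfl

lemma ReesProd.one_def : (1 : ReesProd G α) = ⟨0, 1⟩ := rfl

lemma ReesProd.equi_aux {p q r s : ReesProd G α} (h : p * q = r * s) (hle : r.n ≤ p.n) :
    ∃ u, p = r * u ∧ s = u * q := by
  have h1 : p.n + q.n = r.n + s.n := congrArg ReesProd.n h
  have h2 : (⇑α)^[q.n] p.g * q.g = (⇑α)^[s.n] r.g * s.g := congrArg ReesProd.g h
  refine ⟨⟨p.n - r.n, ((⇑α)^[p.n - r.n] r.g)⁻¹ * p.g⟩, ?_, ?_⟩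
  · rw [ReesProd.mul_def]
    dsimp only
    rw [mul_inv_cancel_left, Nat.add_sub_cancel' hle]
  · rw [ReesProd.mul_def]
    dsimp only
    have hns : s.n = (p.n - r.n) + q.n := by omega
    have hqs : q.n + (p.n - r.n) = s.n := by omega
    have hgs : (⇑α)^[q.n] (((⇑α)^[p.n - r.n] r.g)⁻¹ * p.g) * q.g = s.g := by
      rw [iterate_map_mul, iterate_map_inv, ← Function.iterate_add_apply, hqs,
        mul_assoc, h2, inv_mul_cancel_left]
    rw [hgs, ← hns]

lemma ReesProd.rIdeal_eq (p : ReesProd G α) :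
    rIdeal p = {q : ReesProd G α | p.n ≤ q.n} := by
  ext q
  constructor
  · rintro ⟨r, rfl⟩
    exact Nat.le_add_right p.n r.n
  · intro hq
    refine ⟨⟨q.n - p.n, ((⇑α)^[q.n - p.n] p.g)⁻¹ * q.g⟩, ?_⟩
    show p * (⟨q.n - p.n, ((⇑α)^[q.n - p.n] p.g)⁻¹ * q.g⟩ : ReesProd G α) = q
    rw [ReesProd.mul_def]
    dsimp only
    rw [mul_inv_cancel_left, Nat.add_sub_cancel' hq]

lemma ReesProd.rIdeal_n_eq {p q : ReesProd G α} (h : rIdeal p = rIdeal q) : p.n = q.n := by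
  rw [ReesProd.rIdeal_eq, ReesProd.rIdeal_eq, Set.ext_iff] at h
  have h1 := (h ⟨q.n, 1⟩).mpr (Set.mem_setOf_eq ▸ le_rfl)
  have h2 := (h ⟨p.n, 1⟩).mp (Set.mem_setOf_eq ▸ le_rfl)
  exact le_antisymm h1 h2

lemma ReesProd.n_eq_zero_iff_isUnit (p : ReesProd G α) : p.n = 0 ↔ IsUnit p := by
  constructor
  · intro hp
    obtain ⟨pn, pg⟩ := p
    dsimp only at hp
    subst hp
    refine ⟨⟨⟨0, pg⟩, ⟨0, pg⁻¹⟩, ?_, ?_⟩, rfl⟩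
    · rw [ReesProd.mul_def, ReesProd.one_def]
      simp
    · rw [ReesProd.mul_def, ReesProd.one_def]
      simp
  · rintro ⟨u, rfl⟩
    have := congrArg ReesProd.n u.val_inv
    rw [ReesProd.mul_def, ReesProd.one_def] at this
    have : (u : ReesProd G α).n + (↑u⁻¹ : ReesProd G α).n = 0 := this
    omega

end Aux

/-- Rees's theorem: `ℕ ∗_α G` is a left Rees monoid whose principal right ideals
form an infinite descending chain isomorphic to `ℕ` reversed; and every left Rees
monoid with such a chain of principal right ideals arises this way. -/
theorem stmt15 :
    (∀ (G : Type u) [Group G] (α : G →* G),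
      IsLeftReesMonoid (ReesProd G α) ∧
        Nonempty ({T : Set (ReesProd G α) // ∃ a, T = rIdeal a} ≃o ℕᵒᵈ)) ∧
    (∀ (S : Type u) [Monoid S], IsLeftReesMonoid S →
      Nonempty ({T : Set S // ∃ a : S, T = rIdeal a} ≃o ℕᵒᵈ) →
      ∃ (G : Type u) (_ : Group G) (α : G →* G), Nonempty (S ≃* ReesProd G α)) := by
  constructor
  · intro G _ α
    refine ⟨⟨?_, ?_, ⟨fun p => p.n, fun p q => rfl, fun p => ReesProd.n_eq_zero_iff_isUnit p⟩,
      ⟨1, 1⟩, ?_⟩, ?_⟩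
    · -- left cancellative
      intro p q r h
      have h1 : p.n + q.n = p.n + r.n := congrArg ReesProd.n h
      have hn : q.n = r.n := Nat.add_left_cancel h1
      have h2 : (⇑α)^[q.n] p.g * q.g = (⇑α)^[r.n] p.g * r.g := congrArg ReesProd.g h
      rw [← hn] at h2
      have hg : q.g = r.g := mul_left_cancel h2
      cases q; cases r
      dsimp only at hn hg
      rw [hn, hg]
    · -- equidivisible
      intro p q r s h
      rcases le_total r.n p.n with hle | hle
      · exact Or.inl (ReesProd.equi_aux h hle)
      · exact Or.inr (ReesProd.equi_aux h.symm hle)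
    · -- non-unit
      intro h
      have := (ReesProd.n_eq_zero_iff_isUnit (⟨1, 1⟩ : ReesProd G α)).mpr h
      simp at this
    · -- order iso
      have key : ∀ T : {T : Set (ReesProd G α) // ∃ a, T = rIdeal a},
          T.1 = {q : ReesProd G α | (Classical.choose T.2).n ≤ q.n} :=
        fun T => (Classical.choose_spec T.2).trans (ReesProd.rIdeal_eq _)
      refine ⟨⟨⟨fun T => OrderDual.toDual (Classical.choose T.2).n,
        fun m => ⟨rIdeal (⟨OrderDual.ofDual m, 1⟩ : ReesProd G α),
          ⟨OrderDual.ofDual m, 1⟩, rfl⟩, ?_, ?_⟩, ?_⟩⟩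
      · -- left inverse
        intro T
        apply Subtype.ext
        dsimp only
        rw [ReesProd.rIdeal_eq]
        exact (key T).symm
      · -- right inverse
        intro m
        have hspec := Classical.choose_spec
          (⟨rIdeal (⟨OrderDual.ofDual m, 1⟩ : ReesProd G α),
            ⟨OrderDual.ofDual m, 1⟩, rfl⟩ : {T : Set (ReesProd G α) // ∃ a, T = rIdeal a}).2
        have hn := ReesProd.rIdeal_n_eq hspec
        exact congrArg OrderDual.toDual hn.symm
      · -- map_rel_iff
        intro T T'
        constructor
        · intro hle
          have hle' : (Classical.choose T'.2).n ≤ (Classical.choose T.2).n := hle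
          show T.1 ⊆ T'.1
          intro x hx
          have hx' := (Set.ext_iff.mp (key T) x).mp hx
          exact (Set.ext_iff.mp (key T') x).mpr (le_trans hle' hx')
        · intro hsub
          have hsub' : T.1 ⊆ T'.1 := hsub
          have hmem := hsub' ((Set.ext_iff.mp (key T) ⟨(Classical.choose T.2).n, 1⟩).mpr
            (Set.mem_setOf_eq ▸ le_rfl))
          exact (Set.ext_iff.mp (key T') ⟨(Classical.choose T.2).n, 1⟩).mp hmem
  · -- converse
    intro S _ hS hchain
    obtain ⟨cancel, _equi, ⟨l, hl⟩, -⟩ := hS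
    obtain ⟨e⟩ := hchain
    have l1 : l 1 = 0 := by have := hl.1 1 1; simp at this; omega
    have unit_of_univ : ∀ b : S, rIdeal b = Set.univ → IsUnit b := by
      intro b hb
      have h1 : (1 : S) ∈ rIdeal b := by rw [hb]; trivial
      obtain ⟨s, hs⟩ := h1
      have h2 := hl.1 b s
      rw [show b * s = 1 from hs, l1] at h2
      exact (hl.2 b).mp (by omega)
    have huniv : Set.univ = rIdeal (1 : S) := by
      ext x
      simp only [Set.mem_univ, true_iff]
      exact ⟨x, one_mul x⟩
    set Utop : {T : Set S // ∃ a : S, T = rIdeal a} := ⟨Set.univ, 1, huniv⟩ with hUtop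
    have etop : e Utop = OrderDual.toDual 0 := by
      have h0 : ∀ m : ℕ, OrderDual.ofDual (e Utop) ≤ m := by
        intro m
        have hle : e.symm (OrderDual.toDual m) ≤ Utop := by
          show (e.symm (OrderDual.toDual m)).1 ⊆ Set.univ
          exact Set.subset_univ _
        have := e.monotone hle
        rw [OrderIso.apply_symm_apply] at this
        exact this
      exact Nat.le_zero.mp (h0 0)
    set A := e.symm (OrderDual.toDual 1) with hA
    obtain ⟨a, ha⟩ := A.2
    have haunit : ¬ IsUnit a := by
      intro h
      obtain ⟨u, rfl⟩ := h
      have huniva : rIdeal (u : S) = Set.univ := by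
        ext x
        simp only [Set.mem_univ, iff_true]
        exact ⟨(↑u⁻¹ : S) * x, by
          show (↑u : S) * ((↑u⁻¹ : S) * x) = x
          rw [← mul_assoc, Units.mul_inv, one_mul]⟩
      have hAU : A = Utop := Subtype.ext (by rw [ha, huniva])
      have : OrderDual.toDual (1 : ℕ) = OrderDual.toDual (0 : ℕ) := by
        rw [← etop, ← hAU, hA, OrderIso.apply_symm_apply]
      simp at this
    have la_pos : 0 < l a := Nat.pos_of_ne_zero (fun h => haunit ((hl.2 a).mp h))
    have hmax : ∀ b : S, ¬ IsUnit b → ∃ s, b = a * s := by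
      intro b hb
      set T : {T : Set S // ∃ a : S, T = rIdeal a} := ⟨rIdeal b, b, rfl⟩ with hT
      have hT0 : e T ≠ OrderDual.toDual 0 := by
        intro h
        have hTU : T = Utop := e.injective (h.trans etop.symm)
        have : rIdeal b = Set.univ := congrArg Subtype.val hTU
        exact hb (unit_of_univ b this)
      have h1 : (1 : ℕ) ≤ OrderDual.ofDual (e T) := by
        by_contra hc
        exact hT0 (by
          have : OrderDual.ofDual (e T) = 0 := by omega
          exact this)
      have hTA : T ≤ A := by
        rw [← e.le_iff_le, hA, OrderIso.apply_symm_apply]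
        exact h1
      have hsub : rIdeal b ⊆ rIdeal a := by
        rw [← ha]
        exact hTA
      obtain ⟨s, hs⟩ := hsub ⟨1, mul_one b⟩
      exact ⟨s, hs.symm⟩
    have hdec : ∀ (N : ℕ) (b : S), l b ≤ N → ∃ (n : ℕ) (g : Sˣ), b = a ^ n * ↑g := by
      intro N
      induction N with
      | zero =>
        intro b hb
        obtain ⟨g, rfl⟩ := (hl.2 b).mp (Nat.le_zero.mp hb)
        exact ⟨0, g, by rw [pow_zero, one_mul]⟩
      | succ N ih =>
        intro b hb
        by_cases hu : IsUnit b
        · obtain ⟨g, rfl⟩ := hu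
          exact ⟨0, g, by rw [pow_zero, one_mul]⟩
        · obtain ⟨s, rfl⟩ := hmax b hu
          have hladd := hl.1 a s
          have hls : l s ≤ N := by omega
          obtain ⟨n, g, rfl⟩ := ih s hls
          exact ⟨n + 1, g, by rw [← mul_assoc, ← pow_succ']⟩
    have hexh : ∀ g : Sˣ, ∃ h : Sˣ, (g : S) * a = a * ↑h := by
      intro g
      have lg : l (g : S) = 0 := (hl.2 _).mpr g.isUnit
      have hnu : ¬ IsUnit ((g : S) * a) := by
        intro h
        have h0 := (hl.2 _).mpr h
        have h1 := hl.1 (g : S) a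
        omega
      obtain ⟨s, hs⟩ := hmax _ hnu
      have h1 := hl.1 (g : S) a
      have h2 := hl.1 a s
      rw [hs] at h1
      have hsu : IsUnit s := (hl.2 s).mp (by omega)
      obtain ⟨h, rfl⟩ := hsu
      exact ⟨h, hs⟩
    choose αf hαf using hexh
    have αuniq : ∀ (g h : Sˣ), (g : S) * a = a * ↑h → αf g = h := by
      intro g h hgh
      exact Units.ext (cancel a _ _ ((hαf g).symm.trans hgh))
    set α : Sˣ →* Sˣ :=
      { toFun := αf,
        map_one' := αuniq 1 1 (by rw [Units.val_one, one_mul, mul_one]),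
        map_mul' := fun g h => αuniq (g * h) (αf g * αf h) (by
          rw [Units.val_mul, Units.val_mul, mul_assoc, hαf h, ← mul_assoc, hαf g, mul_assoc]) }
      with hαdef
    have hα : ∀ g : Sˣ, (g : S) * a = a * ↑(α g) := hαf
    have hcomm : ∀ (n : ℕ) (g : Sˣ), (g : S) * a ^ n = a ^ n * ↑((⇑α)^[n] g) := by
      intro n
      induction n with
      | zero => intro g; simp
      | succ n ih =>
        intro g
        rw [pow_succ', ← mul_assoc, hα g, mul_assoc, ih (α g), ← mul_assoc, ← pow_succ',
          ← Function.iterate_succ_apply]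
    refine ⟨Sˣ, inferInstance, α, ?_⟩
    set f : ReesProd Sˣ α →* S :=
      { toFun := fun p => a ^ p.n * ↑p.g,
        map_one' := by
          show a ^ (0 : ℕ) * ((1 : Sˣ) : S) = 1
          rw [pow_zero, Units.val_one, one_mul],
        map_mul' := fun p q => by
          show a ^ (p.n + q.n) * ↑((⇑α)^[q.n] p.g * q.g) = (a ^ p.n * ↑p.g) * (a ^ q.n * ↑q.g)
          rw [Units.val_mul, pow_add, mul_assoc, ← mul_assoc (a ^ q.n), ← hcomm q.n p.g,
            mul_assoc, ← mul_assoc, ← mul_assoc] }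
      with hfdef
    have lpow : ∀ n : ℕ, l (a ^ n) = n * l a := by
      intro n
      induction n with
      | zero => rw [pow_zero, l1]; ring
      | succ n ih => rw [pow_succ, hl.1, ih]; ring
    have hinj : Function.Injective f := by
      intro p q hpq
      have hfp : f p = a ^ p.n * ↑p.g := rfl
      have hfq : f q = a ^ q.n * ↑q.g := rfl
      have hlp : l (f p) = p.n * l a := by
        rw [hfp, hl.1, lpow, (hl.2 _).mpr p.g.isUnit, add_zero]
      have hlq : l (f q) = q.n * l a := by
        rw [hfq, hl.1, lpow, (hl.2 _).mpr q.g.isUnit, add_zero]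
      have hn : p.n = q.n := by
        have : p.n * l a = q.n * l a := by rw [← hlp, ← hlq, hpq]
        exact Nat.eq_of_mul_eq_mul_right la_pos this
      have hg : p.g = q.g := by
        apply Units.ext
        apply cancel (a ^ p.n)
        rw [← hfp, hpq, hfq, hn]
      cases p; cases q
      dsimp only at hn hg
      rw [hn, hg]
    have hsurj : Function.Surjective f := by
      intro b
      obtain ⟨n, g, rfl⟩ := hdec (l b) b le_rfl
      exact ⟨⟨n, g⟩, rfl⟩
    exact ⟨(MulEquiv.ofBijective f ⟨hinj, hsurj⟩).symm⟩
end

section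
/- Let G be a group and α : G → G an injective endomorphism with image H. Equip the set G × ℕ with the product (g,p)(h,q) = (gα^p(h), p+q). Then G × ℕ with this product is a cancellative Levi monoid (a Rees monoid) which is right reversible (Sa ∩ Sb ≠ ∅ for all a, b), and the number of maximal proper principal right ideals of this monoid equals the index |G : H| of H in G. Conversely, every right reversible Rees monoid is isomorphic as a monoid to one constructed in this way from some group G and injective endomorphism α of G. -/
/-- A Rees monoid: a cancellative Levi monoid. -/
def IsReesMonoid (S : Type*) [Monoid S] : Prop :=
  (∀ a b c : S, a * b = a * c → b = c) ∧ (∀ a b c : S, b * a = c * a → b = c) ∧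
    IsLeviMonoid S

/-- Right reversibility: any two principal left ideals intersect. -/
def RightReversible (S : Type*) [Monoid S] : Prop :=
  ∀ a b : S, (lIdeal a ∩ lIdeal b).Nonempty

/-- `T` is a maximal proper principal right ideal. -/
def IsMaxPrincRightIdeal {S : Type*} [Monoid S] (T : Set S) : Prop :=
  (∃ a : S, T = rIdeal a) ∧ T ≠ Set.univ ∧
    ∀ b : S, T ⊆ rIdeal b → rIdeal b ≠ Set.univ → T = rIdeal b

/-- The set `G × ℕ`, as a carrier for the Rees product `G ∗_α ℕ`. -/
structure ReesProdR (G : Type*) [Group G] (α : G →* G) where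
  g : G
  n : ℕ

/-- The Rees product: multiplication `(g,p)(h,q) = (g·α^p(h), p+q)`. -/
instance ReesProdR.instMonoid {G : Type*} [Group G] (α : G →* G) :
    Monoid (ReesProdR G α) where
  mul p q := ⟨p.g * (⇑α)^[p.n] q.g, p.n + q.n⟩
  one := ⟨1, 0⟩
  one_mul p := by
    show (⟨1 * (⇑α)^[0] p.g, 0 + p.n⟩ : ReesProdR G α) = p
    simp
  mul_one p := by
    show (⟨p.g * (⇑α)^[p.n] (1 : G), p.n + 0⟩ : ReesProdR G α) = p
    simp [iterate_map_one]
  mul_assoc p q r := by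
    show (⟨(p.g * (⇑α)^[p.n] q.g) * (⇑α)^[p.n + q.n] r.g, (p.n + q.n) + r.n⟩ :
        ReesProdR G α) =
      ⟨p.g * (⇑α)^[p.n] (q.g * (⇑α)^[q.n] r.g), p.n + (q.n + r.n)⟩
    simp only [ReesProdR.mk.injEq]
    refine ⟨?_, add_assoc _ _ _⟩
    rw [iterate_map_mul, Function.iterate_add_apply, mul_assoc]

namespace ReesAux

variable {G : Type*} [Group G] {α : G →* G}

theorem mul_def (p q : ReesProdR G α) :
    p * q = ⟨p.g * (⇑α)^[p.n] q.g, p.n + q.n⟩ := rfl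

theorem one_def : (1 : ReesProdR G α) = ⟨1, 0⟩ := rfl

theorem ext' {p q : ReesProdR G α} (h1 : p.g = q.g) (h2 : p.n = q.n) : p = q := by
  cases p; cases q; cases h1; cases h2; rfl

theorem mul_g (p q : ReesProdR G α) : (p * q).g = p.g * (⇑α)^[p.n] q.g := rfl
theorem mul_n (p q : ReesProdR G α) : (p * q).n = p.n + q.n := rfl
@[simp] theorem mk_g (g : G) (n : ℕ) : (⟨g, n⟩ : ReesProdR G α).g = g := rfl
@[simp] theorem mk_n (g : G) (n : ℕ) : (⟨g, n⟩ : ReesProdR G α).n = n := rfl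
@[simp] theorem one_g : (1 : ReesProdR G α).g = 1 := rfl
@[simp] theorem one_n : (1 : ReesProdR G α).n = 0 := rfl

theorem isUnit_mk_zero (g : G) : IsUnit (⟨g, 0⟩ : ReesProdR G α) := by
  refine ⟨⟨⟨g, 0⟩, ⟨g⁻¹, 0⟩, ?_, ?_⟩, rfl⟩
  · exact ext' (by simp [mul_g]) rfl
  · exact ext' (by simp [mul_g]) rfl


theorem n_eq_zero_of_isUnit {p : ReesProdR G α} (h : IsUnit p) : p.n = 0 := by
  obtain ⟨u, rfl⟩ := h
  have h2 := congrArg ReesProdR.n u.val_inv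
  rw [mul_n, one_n] at h2
  omega

theorem isUnit_iff {p : ReesProdR G α} : IsUnit p ↔ p.n = 0 := by
  refine ⟨n_eq_zero_of_isUnit, fun h => ?_⟩
  obtain ⟨g, n⟩ := p
  cases h
  exact isUnit_mk_zero g

theorem equi_aux (a b c d : ReesProdR G α) (h : a * b = c * d) (hn : c.n ≤ a.n) :
    ∃ u, a = c * u ∧ d = u * b := by
  have h1 : a.g * (⇑α)^[a.n] b.g = c.g * (⇑α)^[c.n] d.g := congrArg ReesProdR.g h
  have h2 : a.n + b.n = c.n + d.n := congrArg ReesProdR.n h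
  refine ⟨⟨d.g * ((⇑α)^[a.n - c.n] b.g)⁻¹, a.n - c.n⟩, ext' ?_ (by simp [mul_n, mk_n]; omega),
    ext' ?_ (by simp [mul_n, mk_n]; omega)⟩
  · rw [mul_g]
    show a.g = c.g * (⇑α)^[c.n] (d.g * ((⇑α)^[a.n - c.n] b.g)⁻¹)
    rw [iterate_map_mul, iterate_map_inv, ← Function.iterate_add_apply,
      Nat.add_sub_cancel' hn, ← mul_assoc, ← h1, mul_inv_cancel_right]
  · rw [mul_g]
    simp

theorem mem_rIdeal {x a : ReesProdR G α} : x ∈ rIdeal a ↔ ∃ y, a * y = x := by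
  simp [rIdeal, Set.mem_range]

theorem rIdeal_mul_subset (x y : ReesProdR G α) : rIdeal (x * y) ⊆ rIdeal x := by
  rintro z hz
  rw [mem_rIdeal] at hz ⊢
  obtain ⟨w, hw⟩ := hz
  exact ⟨y * w, by rw [← mul_assoc]; exact hw⟩

theorem rIdeal_eq_univ {a : ReesProdR G α} (h : a.n = 0) : rIdeal a = Set.univ := by
  ext x
  simp only [Set.mem_univ, iff_true, mem_rIdeal]
  exact ⟨⟨((⇑α)^[a.n] a.g)⁻¹ * x.g, x.n⟩, ext' (by rw [mul_g]; rw [h]; simp) (by simp [mul_n, h])⟩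

theorem n_ne_zero {a : ReesProdR G α} (h : rIdeal a ≠ Set.univ) : a.n ≠ 0 :=
  fun hn => h (rIdeal_eq_univ hn)

theorem rIdeal_ne_univ {a : ReesProdR G α} (h : a.n ≠ 0) : rIdeal a ≠ Set.univ := by
  intro hu
  have : (1 : ReesProdR G α) ∈ rIdeal a := hu ▸ Set.mem_univ _
  obtain ⟨y, hy⟩ := mem_rIdeal.mp this
  have := congrArg ReesProdR.n hy
  rw [mul_n] at this
  simp only [one_def, mk_n] at this
  exact h (by omega)

theorem isMax_mk_one (g : G) :
    IsMaxPrincRightIdeal (rIdeal (⟨g, 1⟩ : ReesProdR G α)) := by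
  refine ⟨⟨_, rfl⟩, rIdeal_ne_univ one_ne_zero, fun b hsub hb => ?_⟩
  have hmem : (⟨g, 1⟩ : ReesProdR G α) ∈ rIdeal b := hsub (mem_rIdeal.mpr ⟨1, mul_one _⟩)
  obtain ⟨c, hc⟩ := mem_rIdeal.mp hmem
  have hn := congrArg ReesProdR.n hc
  rw [mul_n] at hn
  simp only [mk_n] at hn
  have hbn := n_ne_zero hb
  have hcn : c.n = 0 := by omega
  have hb1 : b = (⟨g, 1⟩ : ReesProdR G α) * ⟨c.g⁻¹, 0⟩ := by
    rw [← hc, mul_assoc]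
    have : c * (⟨c.g⁻¹, 0⟩ : ReesProdR G α) = 1 := by
      refine ext' ?_ (by rw [mul_n, one_n]; simp only [mk_n]; omega)
      rw [mul_g, one_def, hcn]
      simp
    rw [this, mul_one]
  refine Set.Subset.antisymm ?_ ?_
  · rw [← hc]; exact rIdeal_mul_subset b c
  · rw [hb1]; exact rIdeal_mul_subset _ _

theorem exists_of_isMax {T : Set (ReesProdR G α)} (h : IsMaxPrincRightIdeal T) :
    ∃ g : G, T = rIdeal (⟨g, 1⟩ : ReesProdR G α) := by
  obtain ⟨⟨a, rfl⟩, hne, hmax⟩ := h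
  have han := n_ne_zero hne
  refine ⟨a.g, ?_⟩
  have hfac : a = (⟨a.g, 1⟩ : ReesProdR G α) * ⟨1, a.n - 1⟩ := by
    refine ext' ?_ (by rw [mul_n]; simp only [mk_n]; omega)
    rw [mul_g]
    simp [iterate_map_one]
  have hsub : rIdeal a ⊆ rIdeal (⟨a.g, 1⟩ : ReesProdR G α) := by
    conv_lhs => rw [hfac]
    exact rIdeal_mul_subset _ _
  exact hmax _ hsub (rIdeal_ne_univ one_ne_zero)

theorem rIdeal_one_eq_iff {g g' : G} :
    rIdeal (⟨g, 1⟩ : ReesProdR G α) = rIdeal (⟨g', 1⟩ : ReesProdR G α) ↔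
      g⁻¹ * g' ∈ α.range := by
  constructor
  · intro h
    have : (⟨g', 1⟩ : ReesProdR G α) ∈ rIdeal (⟨g, 1⟩ : ReesProdR G α) :=
      h ▸ mem_rIdeal.mpr ⟨1, mul_one _⟩
    obtain ⟨y, hy⟩ := mem_rIdeal.mp this
    have hn := congrArg ReesProdR.n hy
    rw [mul_n] at hn
    have hg := congrArg ReesProdR.g hy
    rw [mul_g] at hg
    refine ⟨y.g, ?_⟩
    simp only [Function.iterate_one] at hg
    rw [← hg]
    group
  · rintro ⟨x, hx⟩
    have h1 : (⟨g', 1⟩ : ReesProdR G α) = ⟨g, 1⟩ * ⟨x, 0⟩ := by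
      refine ext' ?_ rfl
      rw [mul_g]
      simp only [Function.iterate_one]
      rw [hx]
      group
    have h2 : (⟨g, 1⟩ : ReesProdR G α) = ⟨g', 1⟩ * ⟨x⁻¹, 0⟩ := by
      refine ext' ?_ rfl
      rw [mul_g]
      simp only [Function.iterate_one]
      rw [map_inv, hx]
      group
    refine Set.Subset.antisymm ?_ ?_
    · rw [h2]; exact rIdeal_mul_subset _ _
    · rw [h1]; exact rIdeal_mul_subset _ _


theorem part1 (G : Type u) [Group G] (α : G →* G) (H : Subgroup G)
    (hα : Function.Injective α) (hH : α.range = H) :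
    IsReesMonoid (ReesProdR G α) ∧ RightReversible (ReesProdR G α) ∧
      {T : Set (ReesProdR G α) | IsMaxPrincRightIdeal T}.ncard = H.index := by
  subst hH
  refine ⟨⟨?_, ?_, ?_, ⟨fun p => p.n, fun a b => mul_n a b, fun a => isUnit_iff.symm⟩,
      ⟨1, 1⟩, by rw [isUnit_iff]; simp⟩, ?_, ?_⟩
  · -- left cancellative
    intro a b c h
    have h1 : a.g * (⇑α)^[a.n] b.g = a.g * (⇑α)^[a.n] c.g := congrArg ReesProdR.g h
    have h2 : a.n + b.n = a.n + c.n := congrArg ReesProdR.n h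
    exact ext' (hα.iterate a.n (mul_left_cancel h1)) (by omega)
  · -- right cancellative
    intro a b c h
    have h2 : b.n + a.n = c.n + a.n := congrArg ReesProdR.n h
    have hn : b.n = c.n := by omega
    have h1 : b.g * (⇑α)^[b.n] a.g = c.g * (⇑α)^[c.n] a.g := congrArg ReesProdR.g h
    rw [hn] at h1
    exact ext' (mul_right_cancel h1) hn
  · -- equidivisible
    intro a b c d h
    rcases le_total c.n a.n with hle | hle
    · exact Or.inl (equi_aux a b c d h hle)
    · exact Or.inr (equi_aux c d a b h.symm hle)
  · -- right reversible
    intro a b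
    refine ⟨⟨(⇑α)^[a.n] b.g, a.n + b.n⟩, ⟨⟨(⇑α)^[a.n] b.g * ((⇑α)^[b.n] a.g)⁻¹, b.n⟩, ?_⟩,
      ⟨⟨1, a.n⟩, ?_⟩⟩
    · exact ext' (by rw [mul_g]; simp [mul_assoc]) (by rw [mul_n]; simp only [mk_n]; omega)
    · exact ext' (by rw [mul_g]; simp) (by rw [mul_n])
  · -- counting
    have resp : ∀ g g' : G, (QuotientGroup.leftRel α.range).r g g' →
        (⟨rIdeal (⟨g, 1⟩ : ReesProdR G α), isMax_mk_one g⟩ :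
          {T : Set (ReesProdR G α) // IsMaxPrincRightIdeal T}) = ⟨rIdeal ⟨g', 1⟩, isMax_mk_one g'⟩ := by
      intro g g' hgg
      exact Subtype.ext (rIdeal_one_eq_iff.mpr (QuotientGroup.leftRel_apply.mp hgg))
    let e0 : G ⧸ α.range → {T : Set (ReesProdR G α) // IsMaxPrincRightIdeal T} :=
      Quotient.lift _ resp
    have hbij : Function.Bijective e0 := by
      constructor
      · intro x y
        induction x using Quotient.inductionOn with | _ g =>
        induction y using Quotient.inductionOn with | _ g' =>
        intro h
        have := rIdeal_one_eq_iff.mp (congrArg Subtype.val h)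
        exact Quotient.sound (QuotientGroup.leftRel_apply.mpr this)
      · rintro ⟨T, hT⟩
        obtain ⟨g, rfl⟩ := exists_of_isMax hT
        exact ⟨Quotient.mk _ g, rfl⟩
    have e := Equiv.ofBijective e0 hbij
    calc {T : Set (ReesProdR G α) | IsMaxPrincRightIdeal T}.ncard
        = Nat.card {T : Set (ReesProdR G α) // IsMaxPrincRightIdeal T} :=
          (Nat.card_coe_set_eq _).symm
      _ = Nat.card (G ⧸ α.range) := (Nat.card_congr e).symm
      _ = α.range.index := rfl


theorem part2 (S : Type u) [Monoid S] (hS : IsReesMonoid S) (hRR : RightReversible S) :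
    ∃ (G : Type u) (_ : Group G) (α : G →* G),
      Function.Injective α ∧ Nonempty (S ≃* ReesProdR G α) := by
  obtain ⟨lc, rc, equi, ⟨l, hlmul, hl0⟩, s₀, hs₀⟩ := hS
  have hunit : ∀ u : Sˣ, l ↑u = 0 := fun u => (hl0 _).mpr u.isUnit
  set M : Set ℕ := {n | 0 < n ∧ ∃ s : S, l s = n} with hMdef
  have hM : M.Nonempty :=
    ⟨l s₀, Nat.pos_of_ne_zero (fun h => hs₀ ((hl0 _).mp h)), s₀, rfl⟩
  obtain ⟨hmpos, a, ha⟩ := Nat.sInf_mem hM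
  set m := sInf M with hmdef
  have hmin : ∀ s : S, ¬IsUnit s → m ≤ l s := fun s hs =>
    Nat.sInf_le ⟨Nat.pos_of_ne_zero (fun h => hs ((hl0 _).mp h)), s, rfl⟩
  -- every non-unit is divisible on the right by a
  have step : ∀ s : S, ¬IsUnit s → ∃ t, s = t * a := by
    intro s hs
    obtain ⟨z, ⟨x, hx⟩, ⟨y, hy⟩⟩ := hRR a s
    have hxy : x * a = y * s := hx.trans hy.symm
    rcases equi x a y s hxy with ⟨u, _, hu2⟩ | ⟨v, _, hv2⟩
    · exact ⟨u, hu2⟩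
    · have hlen : l a = l v + l s := by rw [hv2, hlmul]
      have hls : m ≤ l s := hmin s hs
      have hlv : l v = 0 := by omega
      obtain ⟨w, rfl⟩ := (hl0 v).mp hlv
      exact ⟨(↑w⁻¹ : S), by rw [hv2, Units.inv_mul_cancel_left]⟩
  have lpow : ∀ n : ℕ, l (a ^ n) = n * m := by
    intro n
    induction n with
    | zero => simp [(hl0 _).mpr isUnit_one]
    | succ n ih => rw [pow_succ, hlmul, ih, ha]; ring
  -- decomposition
  have decomp : ∀ N : ℕ, ∀ s : S, l s ≤ N → ∃ (u : Sˣ) (n : ℕ), s = ↑u * a ^ n := by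
    intro N
    induction N with
    | zero =>
      intro s hls
      obtain ⟨u, hu⟩ := (hl0 s).mp (Nat.le_zero.mp hls)
      exact ⟨u, 0, by rw [pow_zero, mul_one, hu]⟩
    | succ N ih =>
      intro s hls
      by_cases hu : IsUnit s
      · obtain ⟨u, hu⟩ := hu
        exact ⟨u, 0, by rw [pow_zero, mul_one, hu]⟩
      · obtain ⟨t, rfl⟩ := step s hu
        have hlt : l t ≤ N := by
          have := hlmul t a
          omega
        obtain ⟨u, n, hn⟩ := ih t hlt
        exact ⟨u, n + 1, by rw [hn, pow_succ, mul_assoc]⟩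
  have decomp' : ∀ s : S, ∃ (u : Sˣ) (n : ℕ), s = ↑u * a ^ n := fun s =>
    decomp (l s) s le_rfl
  have uniq : ∀ (u u' : Sˣ) (n k : ℕ), (↑u : S) * a ^ n = ↑u' * a ^ k → u = u' ∧ n = k := by
    intro u u' n k h
    have hlen : n * m = k * m := by
      have h1 := congrArg l h
      rw [hlmul, hlmul, hunit, hunit, lpow, lpow] at h1
      omega
    have hnk : n = k := Nat.eq_of_mul_eq_mul_right hmpos hlen
    subst hnk
    refine ⟨Units.ext (rc (a ^ n) ↑u ↑u' h), rfl⟩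
  -- construct α
  have spec : ∀ g : Sˣ, ∃ u : Sˣ, a * ↑g = ↑u * a := by
    intro g
    obtain ⟨u, n, hun⟩ := decomp' (a * ↑g)
    have hl1 : l (a * ↑g) = m := by rw [hlmul, hunit, add_zero, ha]
    have hl2 : l (a * ↑g) = n * m := by rw [hun, hlmul, hunit, lpow]; omega
    have hn1 : n = 1 := Nat.eq_of_mul_eq_mul_right hmpos (by omega)
    exact ⟨u, by rw [hun, hn1, pow_one]⟩
  set f : Sˣ → Sˣ := fun g => (spec g).choose with hfdef
  have hf : ∀ g : Sˣ, a * ↑g = ↑(f g) * a := fun g => (spec g).choose_spec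
  have hfmul : ∀ g h : Sˣ, f (g * h) = f g * f h := by
    intro g h
    refine Units.ext (rc a _ _ ?_)
    rw [← hf (g * h)]
    rw [Units.val_mul, Units.val_mul, ← mul_assoc, mul_assoc ((f g : S)), ← hf h,
      ← mul_assoc, ← hf g, mul_assoc]
  set α : Sˣ →* Sˣ := MonoidHom.mk' f hfmul with hαdef
  have hαcoe : ∀ g : Sˣ, α g = f g := fun g => rfl
  have hαinj : Function.Injective α := by
    intro g h hgh
    have : a * ↑g = a * ↑h := by
      rw [hf g, hf h, ← hαcoe, ← hαcoe, hgh]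
    exact Units.ext (lc a ↑g ↑h this)
  have key : ∀ (n : ℕ) (h : Sˣ), a ^ n * ↑h = ↑((⇑α)^[n] h) * a ^ n := by
    intro n
    induction n with
    | zero => intro h; simp
    | succ n ih =>
      intro h
      rw [pow_succ, mul_assoc, hf h, ← hαcoe, ← mul_assoc, ih (α h),
        Function.iterate_succ_apply, mul_assoc]
  -- the isomorphism
  let φ : ReesProdR Sˣ α →* S :=
    { toFun := fun p => ↑p.g * a ^ p.n
      map_one' := by simp [one_def]
      map_mul' := by
        intro p q
        simp only [mul_g, mul_n]
        rw [Units.val_mul, pow_add, mul_assoc, mul_assoc, ← mul_assoc ((a : S) ^ p.n),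
          key p.n q.g, mul_assoc] }
  have hφ : ∀ p : ReesProdR Sˣ α, φ p = ↑p.g * a ^ p.n := fun p => rfl
  have hbij : Function.Bijective φ := by
    constructor
    · intro p q h
      rw [hφ, hφ] at h
      obtain ⟨h1, h2⟩ := uniq _ _ _ _ h
      exact ext' (by rw [h1]) h2
    · intro s
      obtain ⟨u, n, hn⟩ := decomp' s
      exact ⟨⟨u, n⟩, hn.symm⟩
  exact ⟨Sˣ, inferInstance, α, hαinj, ⟨(MulEquiv.ofBijective φ hbij).symm⟩⟩

end ReesAux

/-- Rees's theorem, recurrent case: for an injective endomorphism `α` of `G`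
with image `H`, the monoid `G ∗_α ℕ` is a right reversible Rees monoid having
`|G : H|` maximal proper principal right ideals, and every right reversible
Rees monoid arises this way. -/

theorem stmt16 :
    (∀ (G : Type u) [Group G] (α : G →* G) (H : Subgroup G),
      Function.Injective α → α.range = H →
      IsReesMonoid (ReesProdR G α) ∧ RightReversible (ReesProdR G α) ∧
        {T : Set (ReesProdR G α) | IsMaxPrincRightIdeal T}.ncard = H.index) ∧
    (∀ (S : Type u) [Monoid S], IsReesMonoid S → RightReversible S →
      ∃ (G : Type u) (_ : Group G) (α : G →* G),
        Function.Injective α ∧ Nonempty (S ≃* ReesProdR G α)) := by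
  constructor
  · intro G _ α H hα hH
    exact ReesAux.part1 G α H hα hH
  · intro S _ hS hRR
    exact ReesAux.part2 S hS hRR
end

section
/- Let V be a group, let U be a subgroup of V, and let φ : U → V be a group homomorphism whose image is a subgroup of V (a partial endomorphism of V with domain of definition U). Let M be the monoid presented by generators the elements of V together with one additional generator x, subject to all relations holding in V together with the relations ux = xφ(u) for all u ∈ U. Then M is a left Rees monoid; moreover the canonical map V → M is injective, its image is exactly the group of units of M, and the image of x in M is an atom. -/
/-- The defining relations of the monoid
`Mon⟨V, x ∣ relations of V, u x = x φ(u) (u ∈ U)⟩` on the free monoid over the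
alphabet `V ⊕ Unit` (`Sum.inr ()` playing the role of the new generator `x`). -/
def presRel (V : Type*) [Group V] (U : Subgroup V) (φ : U →* V) :
    FreeMonoid (V ⊕ Unit) → FreeMonoid (V ⊕ Unit) → Prop := fun w₁ w₂ =>
  (∃ a b : V, w₁ = FreeMonoid.of (Sum.inl a) * FreeMonoid.of (Sum.inl b) ∧
      w₂ = FreeMonoid.of (Sum.inl (a * b))) ∨
  (w₁ = FreeMonoid.of (Sum.inl (1 : V)) ∧ w₂ = 1) ∨
  (∃ u : U, w₁ = FreeMonoid.of (Sum.inl (u : V)) * FreeMonoid.of (Sum.inr ()) ∧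
      w₂ = FreeMonoid.of (Sum.inr ()) * FreeMonoid.of (Sum.inl (φ u)))

/-- The presented monoid `Mon⟨V, x ∣ relations of V, u x = x φ(u) (u ∈ U)⟩`. -/
def PresM (V : Type*) [Group V] (U : Subgroup V) (φ : U →* V) :=
  (conGen (presRel V U φ)).Quotient

instance (V : Type*) [Group V] (U : Subgroup V) (φ : U →* V) : Monoid (PresM V U φ) := by
  delta PresM; infer_instance


namespace Stmt17Aux

variable {V : Type*} [Group V] (U : Subgroup V) (φ : U →* V)

noncomputable def sigU (w : V) : U :=
  ⟨(Quotient.out (QuotientGroup.mk w : V ⧸ U))⁻¹ * w, by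
    rw [← QuotientGroup.eq]
    exact QuotientGroup.out_eq' _⟩

lemma out_mul_sigU (w : V) :
    (Quotient.out (QuotientGroup.mk w : V ⧸ U)) * (sigU U w : V) = w := by
  simp [sigU]

lemma mk_mul_of_mem' (w : V) (u : U) :
    (QuotientGroup.mk (w * u) : V ⧸ U) = QuotientGroup.mk w :=
  QuotientGroup.mk_mul_of_mem w u.2

lemma sigU_mul (w : V) (u : U) : sigU U (w * u) = sigU U w * u := by
  apply Subtype.ext
  simp [sigU, mk_mul_of_mem' U w u, mul_assoc]

lemma sigU_out (c : V ⧸ U) : sigU U (Quotient.out c) = 1 := by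
  apply Subtype.ext
  simp [sigU, QuotientGroup.out_eq']

/-- Normal forms. -/
abbrev NF := List (V ⧸ U) × V

/-- Right multiplication by a generator, on normal forms. -/
noncomputable def Rgen : V ⊕ Unit → NF U → NF U
  | Sum.inl v => fun n => (n.1, n.2 * v)
  | Sum.inr _ => fun n => (n.1 ++ [QuotientGroup.mk n.2], φ (sigU U n.2))

/-- The right action of the free monoid on normal forms. -/
noncomputable def Fw : FreeMonoid (V ⊕ Unit) →* (Function.End (NF U))ᵐᵒᵖ :=
  FreeMonoid.lift fun a => MulOpposite.op (Rgen U φ a)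

lemma Fw_of (a : V ⊕ Unit) (n : NF U) :
    MulOpposite.unop (Fw U φ (FreeMonoid.of a)) n = Rgen U φ a n := rfl

lemma Fw_mul (w₁ w₂ : FreeMonoid (V ⊕ Unit)) (n : NF U) :
    MulOpposite.unop (Fw U φ (w₁ * w₂)) n
      = MulOpposite.unop (Fw U φ w₂) (MulOpposite.unop (Fw U φ w₁) n) := by
  rw [map_mul]; rfl

lemma Fw_one (n : NF U) : MulOpposite.unop (Fw U φ (1 : FreeMonoid (V ⊕ Unit))) n = n := by
  rw [map_one]; rfl

lemma Fw_rel : conGen (presRel V U φ) ≤ Con.ker (Fw U φ) := by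
  apply Con.conGen_le.mpr
  rintro w₁ w₂ (⟨a, b, rfl, rfl⟩ | ⟨rfl, rfl⟩ | ⟨u, rfl, rfl⟩) <;>
    rw [Con.ker_rel] <;> apply MulOpposite.unop_injective <;> funext n
  · rw [Fw_mul, Fw_of, Fw_of, Fw_of]
    simp [Rgen, mul_assoc]
  · rw [Fw_of, Fw_one]
    show (n.1, n.2 * 1) = n
    simp
  · rw [Fw_mul, Fw_mul, Fw_of, Fw_of, Fw_of, Fw_of]
    show Rgen U φ (Sum.inr ()) (Rgen U φ (Sum.inl (u : V)) n)
      = Rgen U φ (Sum.inl (φ u)) (Rgen U φ (Sum.inr ()) n)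
    simp only [Rgen]
    refine Prod.ext ?_ ?_
    · simp [mk_mul_of_mem' U n.2 u]
    · simp [sigU_mul U n.2 u]

/-- The action homomorphism on the quotient. -/
noncomputable def actHom : PresM V U φ →* (Function.End (NF U))ᵐᵒᵖ :=
  Con.lift _ (Fw U φ) (Fw_rel U φ)

/-- The right action of `PresM` on normal forms. -/
noncomputable def act (m : PresM V U φ) (n : NF U) : NF U :=
  MulOpposite.unop (actHom U φ m) n

lemma act_mul (m m' : PresM V U φ) (n : NF U) :
    act U φ (m * m') n = act U φ m' (act U φ m n) := by
  unfold act
  rw [map_mul]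
  rfl

lemma act_mk' (w : FreeMonoid (V ⊕ Unit)) (n : NF U) :
    act U φ ((conGen (presRel V U φ)).mk' w) n = MulOpposite.unop (Fw U φ w) n := by
  rfl

/-- The quotient map into `PresM`. -/
def mkq (w : FreeMonoid (V ⊕ Unit)) : PresM V U φ := (conGen (presRel V U φ)).mk' w

lemma act_mkq (w : FreeMonoid (V ⊕ Unit)) (n : NF U) :
    act U φ (mkq U φ w) n = MulOpposite.unop (Fw U φ w) n := rfl

/-- The image of `v ∈ V` in the presented monoid. -/
def gv (v : V) : PresM V U φ := mkq U φ (FreeMonoid.of (Sum.inl v))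

/-- The image of the extra generator `x`. -/
def gx : PresM V U φ := mkq U φ (FreeMonoid.of (Sum.inr ()))

lemma mk'_mul (w₁ w₂ : FreeMonoid (V ⊕ Unit)) :
    mkq U φ w₁ * mkq U φ w₂ = mkq U φ (w₁ * w₂) := rfl

lemma mk'_one : mkq U φ 1 = 1 := rfl

lemma mk'_eq {w₁ w₂ : FreeMonoid (V ⊕ Unit)}
    (h : conGen (presRel V U φ) w₁ w₂) :
    mkq U φ w₁ = mkq U φ w₂ :=
  (Con.eq _).mpr h

lemma gv_mul (a b : V) : gv U φ a * gv U φ b = gv U φ (a * b) := by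
  show mkq U φ _ * mkq U φ _ = mkq U φ _
  rw [mk'_mul]
  exact mk'_eq U φ (ConGen.Rel.of _ _ (Or.inl ⟨a, b, rfl, rfl⟩))

lemma gv_one : gv U φ (1 : V) = 1 := by
  have h : gv U φ (1 : V) = mkq U φ 1 :=
    mk'_eq U φ (ConGen.Rel.of _ _ (Or.inr (Or.inl ⟨rfl, rfl⟩)))
  rw [h, mk'_one]

lemma u_rel (u : U) : gv U φ (u : V) * gx U φ = gx U φ * gv U φ (φ u) := by
  show mkq U φ _ * mkq U φ _ = mkq U φ _ * mkq U φ _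
  rw [mk'_mul, mk'_mul]
  exact mk'_eq U φ (ConGen.Rel.of _ _ (Or.inr (Or.inr ⟨u, rfl, rfl⟩)))

lemma isUnit_gv (v : V) : IsUnit (gv U φ v) := by
  refine isUnit_iff_exists.mpr ⟨gv U φ v⁻¹, ?_, ?_⟩ <;>
    rw [gv_mul] <;> simp [gv_one]

lemma act_gv (v : V) (n : NF U) : act U φ (gv U φ v) n = (n.1, n.2 * v) := rfl

lemma act_gx (n : NF U) :
    act U φ (gx U φ) n = (n.1 ++ [QuotientGroup.mk n.2], φ (sigU U n.2)) := rfl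

lemma act_one (n : NF U) : act U φ 1 n = n := by
  unfold act
  rw [map_one]
  rfl

/-- The normal form of an element. -/
noncomputable def nf (m : PresM V U φ) : NF U := act U φ m ([], 1)

/-- Product of the segments corresponding to a list of cosets. -/
noncomputable def SL (l : List (V ⧸ U)) : PresM V U φ :=
  (l.map (fun c => gv U φ (Quotient.out c) * gx U φ)).prod

lemma SL_nil : SL U φ [] = 1 := rfl

lemma SL_cons (c : V ⧸ U) (l : List (V ⧸ U)) :
    SL U φ (c :: l) = (gv U φ (Quotient.out c) * gx U φ) * SL U φ l := by
  simp [SL]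

lemma SL_append (l₁ l₂ : List (V ⧸ U)) : SL U φ (l₁ ++ l₂) = SL U φ l₁ * SL U φ l₂ := by
  simp [SL]

/-- The element of the presented monoid given by a normal form. -/
noncomputable def emb (n : NF U) : PresM V U φ := SL U φ n.1 * gv U φ n.2

lemma emb_nil (w : V) : emb U φ ([], w) = gv U φ w := by
  simp [emb, SL_nil]

lemma emb_mul_gv (n : NF U) (v : V) : emb U φ n * gv U φ v = emb U φ (n.1, n.2 * v) := by
  unfold emb
  rw [mul_assoc, gv_mul]

lemma emb_mul_gx (n : NF U) :
    emb U φ n * gx U φ = emb U φ (n.1 ++ [QuotientGroup.mk n.2], φ (sigU U n.2)) := by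
  have hw : gv U φ n.2 = gv U φ (Quotient.out (QuotientGroup.mk n.2 : V ⧸ U))
      * gv U φ (sigU U n.2 : V) := by
    rw [gv_mul, out_mul_sigU]
  unfold emb
  rw [hw, SL_append, SL_cons, SL_nil]
  rw [mul_assoc, mul_assoc, u_rel]
  simp [mul_assoc]

lemma emb_append (l₁ l₂ : List (V ⧸ U)) (w : V) :
    emb U φ (l₁, 1) * emb U φ (l₂, w) = emb U φ (l₁ ++ l₂, w) := by
  simp [emb, SL_append, gv_one, mul_assoc]

lemma key_step (a : V ⊕ Unit) (n : NF U) :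
    emb U φ (Rgen U φ a n)
      = emb U φ n * mkq U φ (FreeMonoid.of a) := by
  cases a with
  | inl v =>
      show emb U φ (n.1, n.2 * v) = emb U φ n * gv U φ v
      rw [emb_mul_gv]
  | inr u =>
      show emb U φ (n.1 ++ [QuotientGroup.mk n.2], φ (sigU U n.2)) = emb U φ n * gx U φ
      rw [emb_mul_gx]

lemma word_step (g : FreeMonoid (V ⊕ Unit)) :
    ∀ m : PresM V U φ, emb U φ (nf U φ m) = m →
      emb U φ (nf U φ (m * mkq U φ g)) = m * mkq U φ g := by
  induction g using FreeMonoid.recOn with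
  | one => intro m hm; rw [mk'_one, mul_one]; exact hm
  | of_mul a g ih =>
      intro m hm
      rw [← mk'_mul, ← mul_assoc]
      apply ih
      have h1 : nf U φ (m * mkq U φ (FreeMonoid.of a))
          = Rgen U φ a (nf U φ m) := by
        unfold nf
        rw [act_mul, act_mkq, Fw_of]
      rw [h1, key_step, hm]

lemma emb_nf (m : PresM V U φ) : emb U φ (nf U φ m) = m := by
  induction m using Con.induction_on with
  | H w =>
      have h1 : emb U φ (nf U φ (1 : PresM V U φ)) = 1 := by
        unfold nf
        rw [act_one]
        simp [emb_nil, gv_one]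
      have := word_step U φ w 1 h1
      rw [one_mul] at this
      exact this

lemma Fw_prefix (g : FreeMonoid (V ⊕ Unit)) :
    ∀ (l₀ l : List (V ⧸ U)) (w : V),
      MulOpposite.unop (Fw U φ g) (l₀ ++ l, w)
        = (l₀ ++ (MulOpposite.unop (Fw U φ g) (l, w)).1,
            (MulOpposite.unop (Fw U φ g) (l, w)).2) := by
  induction g using FreeMonoid.recOn with
  | one => intro l₀ l w; rw [Fw_one, Fw_one]
  | of_mul a g ih =>
      intro l₀ l w
      rw [Fw_mul, Fw_mul, Fw_of, Fw_of]
      cases a with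
      | inl v => exact ih l₀ l (w * v)
      | inr u =>
          show MulOpposite.unop (Fw U φ g) ((l₀ ++ l) ++ [QuotientGroup.mk w], φ (sigU U w)) = _
          rw [List.append_assoc]
          exact ih l₀ (l ++ [QuotientGroup.mk w]) (φ (sigU U w))

lemma act_prefix (m : PresM V U φ) (l₀ l : List (V ⧸ U)) (w : V) :
    act U φ m (l₀ ++ l, w)
      = (l₀ ++ (act U φ m (l, w)).1, (act U φ m (l, w)).2) := by
  induction m using Con.induction_on with
  | H g =>
      have h : ((g : (conGen (presRel V U φ)).Quotient) : PresM V U φ) = mkq U φ g := rfl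
      rw [h, act_mkq, act_mkq]
      exact Fw_prefix U φ g l₀ l w

lemma nf_gv (v : V) : nf U φ (gv U φ v) = ([], v) := by
  unfold nf
  rw [act_gv, one_mul]

lemma act_base (w : V) (b : PresM V U φ) :
    act U φ b ([], w) = nf U φ (gv U φ w * b) := by
  unfold nf
  rw [act_mul, act_gv, one_mul]

lemma nf_emb (n : NF U) : nf U φ (emb U φ n) = n := by
  obtain ⟨l, w⟩ := n
  induction l generalizing w with
  | nil => rw [emb_nil, nf_gv]
  | cons c l ih =>
      have hemb : emb U φ (c :: l, w)
          = (gv U φ (Quotient.out c) * gx U φ) * emb U φ (l, w) := by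
        unfold emb
        rw [SL_cons, mul_assoc]
      have hseg : nf U φ (gv U φ (Quotient.out c) * gx U φ) = ([c], 1) := by
        unfold nf
        rw [act_mul, act_gv, act_gx]
        simp [QuotientGroup.out_eq', sigU_out]
      have : nf U φ (emb U φ (c :: l, w))
          = act U φ (emb U φ (l, w)) ([c], 1) := by
        rw [hemb]
        unfold nf
        rw [act_mul]
        rw [show act U φ (gv U φ (Quotient.out c) * gx U φ) ([], 1) = ([c], 1) from hseg]
      rw [this]
      have hpre := act_prefix U φ (emb U φ (l, w)) [c] [] 1
      rw [show ([c] ++ [] : List (V ⧸ U)) = [c] from rfl] at hpre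
      rw [hpre, show act U φ (emb U φ (l, w)) ([], 1) = nf U φ (emb U φ (l, w)) from rfl,
        ih w]
      rfl

/-- The length word-homomorphism. -/
def Lw : FreeMonoid (V ⊕ Unit) →* Multiplicative ℕ :=
  FreeMonoid.lift (Sum.elim (fun _ => 1) (fun _ => Multiplicative.ofAdd 1))

lemma Lw_rel : conGen (presRel V U φ) ≤ Con.ker (Lw (V := V)) := by
  apply Con.conGen_le.mpr
  rintro w₁ w₂ (⟨a, b, rfl, rfl⟩ | ⟨rfl, rfl⟩ | ⟨u, rfl, rfl⟩) <;> rw [Con.ker_rel]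
  · rw [map_mul]
    show Lw (FreeMonoid.of (Sum.inl a)) * Lw (FreeMonoid.of (Sum.inl b))
      = Lw (FreeMonoid.of (Sum.inl (a * b)))
    simp [Lw]
  · show Lw (FreeMonoid.of (Sum.inl (1 : V))) = Lw 1
    simp [Lw]
  · rw [map_mul, map_mul]
    show Lw (FreeMonoid.of (Sum.inl (u : V))) * Lw (FreeMonoid.of (Sum.inr ()))
      = Lw (FreeMonoid.of (Sum.inr ())) * Lw (FreeMonoid.of (Sum.inl (φ u)))
    simp [Lw, mul_comm]

/-- The length homomorphism on the presented monoid. -/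
def LHom : PresM V U φ →* Multiplicative ℕ :=
  Con.lift _ (Lw (V := V)) (Lw_rel U φ)

/-- The length function. -/
def len (m : PresM V U φ) : ℕ := Multiplicative.toAdd (LHom U φ m)

lemma len_mul (a b : PresM V U φ) : len U φ (a * b) = len U φ a + len U φ b := by
  unfold len
  rw [map_mul]
  rfl

lemma len_one : len U φ (1 : PresM V U φ) = 0 := by
  unfold len
  rw [map_one]
  rfl

lemma len_gv (v : V) : len U φ (gv U φ v) = 0 := rfl

lemma len_gx : len U φ (gx U φ) = 1 := rfl

lemma len_emb (n : NF U) : len U φ (emb U φ n) = n.1.length := by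
  obtain ⟨l, w⟩ := n
  induction l with
  | nil => rw [emb_nil]; exact len_gv U φ w
  | cons c l ih =>
      have hemb : emb U φ (c :: l, w)
          = (gv U φ (Quotient.out c) * gx U φ) * emb U φ (l, w) := by
        unfold emb
        rw [SL_cons, mul_assoc]
      rw [hemb, len_mul, len_mul, len_gv, len_gx, ih]
      simp [Nat.add_comm]

lemma len_nf (m : PresM V U φ) : len U φ m = (nf U φ m).1.length := by
  conv_lhs => rw [← emb_nf U φ m]
  exact len_emb U φ _

lemma len_unit {m : PresM V U φ} (h : IsUnit m) : len U φ m = 0 := by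
  obtain ⟨u, rfl⟩ := h
  have h1 : len U φ (u : PresM V U φ) + len U φ ((u⁻¹ : _) : PresM V U φ) = 0 := by
    rw [← len_mul, u.mul_inv, len_one]
  exact Nat.eq_zero_of_add_eq_zero_right h1

lemma unit_iff (m : PresM V U φ) : IsUnit m ↔ ∃ v : V, m = gv U φ v := by
  constructor
  · intro h
    have h0 : (nf U φ m).1.length = 0 := by rw [← len_nf]; exact len_unit U φ h
    have h1 : (nf U φ m).1 = [] := List.length_eq_zero_iff.mp h0
    refine ⟨(nf U φ m).2, ?_⟩
    conv_lhs => rw [← emb_nf U φ m]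
    rw [show nf U φ m = ((nf U φ m).1, (nf U φ m).2) from rfl, h1, emb_nil]
  · rintro ⟨v, rfl⟩
    exact isUnit_gv U φ v

lemma gv_injective : Function.Injective (gv U φ) := by
  intro a b h
  have := congrArg (nf U φ) h
  rw [nf_gv, nf_gv] at this
  exact (Prod.mk.injEq _ _ _ _).mp this |>.2

lemma nf_mul (a b : PresM V U φ) :
    nf U φ (a * b) = ((nf U φ a).1 ++ (nf U φ (gv U φ (nf U φ a).2 * b)).1,
      (nf U φ (gv U φ (nf U φ a).2 * b)).2) := by
  have h0 : nf U φ (a * b) = act U φ b (nf U φ a) := act_mul U φ a b ([], 1)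
  have h1 : act U φ b (nf U φ a) = act U φ b ((nf U φ a).1 ++ [], (nf U φ a).2) := by
    rw [List.append_nil]
  rw [h0, h1, act_prefix, act_base]

lemma left_cancel (a b c : PresM V U φ) (h : a * b = a * c) : b = c := by
  have h' := congrArg (nf U φ) h
  rw [nf_mul U φ a b, nf_mul U φ a c] at h'
  have h1 := (Prod.mk.injEq _ _ _ _).mp h'
  have h2 : (nf U φ (gv U φ (nf U φ a).2 * b)).1
      = (nf U φ (gv U φ (nf U φ a).2 * c)).1 :=
    List.append_cancel_left h1.1
  have h3 : nf U φ (gv U φ (nf U φ a).2 * b) = nf U φ (gv U φ (nf U φ a).2 * c) :=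
    Prod.ext h2 h1.2
  have h4 : gv U φ (nf U φ a).2 * b = gv U φ (nf U φ a).2 * c := by
    have := congrArg (emb U φ) h3
    rwa [emb_nf, emb_nf] at this
  have h5 := congrArg (fun z => gv U φ ((nf U φ a).2)⁻¹ * z) h4
  simpa [← mul_assoc, gv_mul, gv_one] using h5

lemma mul_lemma (n : NF U) (lr : List (V ⧸ U)) (w : V) :
    emb U φ n * (gv U φ n.2⁻¹ * emb U φ (lr, w)) = emb U φ (n.1 ++ lr, w) := by
  rw [← mul_assoc, emb_mul_gv,
    show ((n.1 : List (V ⧸ U)), n.2 * n.2⁻¹) = ((n.1 : List (V ⧸ U)), (1 : V)) by simp,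
    emb_append]

lemma equi_half (a b c d : PresM V U φ) (h : a * b = c * d)
    (hpre : (nf U φ a).1 <+: (nf U φ c).1) :
    ∃ v : PresM V U φ, c = a * v ∧ b = v * d := by
  obtain ⟨lr, hlr⟩ := hpre
  set v := gv U φ ((nf U φ a).2)⁻¹ * emb U φ (lr, (nf U φ c).2) with hv
  have hc : c = a * v := by
    have h1 : a * v = emb U φ ((nf U φ a).1 ++ lr, (nf U φ c).2) := by
      calc a * v = emb U φ (nf U φ a) * v := by rw [emb_nf]
        _ = emb U φ ((nf U φ a).1 ++ lr, (nf U φ c).2) := mul_lemma U φ _ _ _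
    rw [h1, hlr]
    exact (emb_nf U φ c).symm
  refine ⟨v, hc, ?_⟩
  apply left_cancel U φ a
  calc a * b = c * d := h
    _ = (a * v) * d := by rw [← hc]
    _ = a * (v * d) := mul_assoc _ _ _

lemma equidiv : Equidivisible (PresM V U φ) := by
  intro a b c d h
  have h' := congrArg (nf U φ) h
  rw [nf_mul U φ a b, nf_mul U φ c d] at h'
  have h1 : ((nf U φ a).1 : List (V ⧸ U)) <+:
      (nf U φ c).1 ++ (nf U φ (gv U φ (nf U φ c).2 * d)).1 := by
    rw [← (Prod.mk.injEq _ _ _ _).mp h' |>.1]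
    exact List.prefix_append _ _
  have h2 : ((nf U φ c).1 : List (V ⧸ U)) <+:
      (nf U φ c).1 ++ (nf U φ (gv U φ (nf U φ c).2 * d)).1 :=
    List.prefix_append _ _
  rcases List.prefix_or_prefix_of_prefix h1 h2 with hp | hp
  · exact Or.inr (equi_half U φ a b c d h hp)
  · obtain ⟨u, hu1, hu2⟩ := equi_half U φ c d a b h.symm hp
    exact Or.inl ⟨u, hu1, hu2⟩

lemma not_unit_gx : ¬ IsUnit (gx U φ) := by
  intro h
  have := len_unit U φ h
  rw [len_gx] at this
  exact one_ne_zero this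

lemma len_zero_iff (m : PresM V U φ) : len U φ m = 0 ↔ IsUnit m := by
  constructor
  · intro h
    have h1 : (nf U φ m).1 = [] := List.length_eq_zero_iff.mp (by rw [← len_nf]; exact h)
    rw [unit_iff]
    refine ⟨(nf U φ m).2, ?_⟩
    conv_lhs => rw [← emb_nf U φ m]
    rw [show nf U φ m = ((nf U φ m).1, (nf U φ m).2) from rfl, h1, emb_nil]
  · exact len_unit U φ

lemma atom_gx : IsMonoidAtom (gx U φ) := by
  refine ⟨not_unit_gx U φ, fun b c h => ?_⟩
  have h1 : len U φ b + len U φ c = 1 := by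
    rw [← len_mul, ← h, len_gx]
  rcases Nat.eq_zero_or_pos (len U φ b) with hb | hb
  · exact Or.inl ((len_zero_iff U φ b).mp hb)
  · have : len U φ c = 0 := by omega
    exact Or.inr ((len_zero_iff U φ c).mp this)

end Stmt17Aux

/-- The presented monoid is a left Rees monoid, `V` embeds as its group of
units, and the extra generator `x` is an atom. -/
theorem stmt17 {V : Type*} [Group V] (U : Subgroup V) (φ : U →* V) :
    IsLeftReesMonoid (PresM V U φ) ∧
    Function.Injective (fun v : V =>
      ((conGen (presRel V U φ)).mk' (FreeMonoid.of (Sum.inl v)) : PresM V U φ)) ∧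
    (∀ m : PresM V U φ, IsUnit m ↔
      ∃ v : V, m = (conGen (presRel V U φ)).mk' (FreeMonoid.of (Sum.inl v))) ∧
    IsMonoidAtom ((conGen (presRel V U φ)).mk' (FreeMonoid.of (Sum.inr ())) :
      PresM V U φ) := by
  refine ⟨⟨Stmt17Aux.left_cancel U φ, Stmt17Aux.equidiv U φ,
      ⟨Stmt17Aux.len U φ, Stmt17Aux.len_mul U φ, Stmt17Aux.len_zero_iff U φ⟩,
      ⟨Stmt17Aux.gx U φ, Stmt17Aux.not_unit_gx U φ⟩⟩, ?_, ?_, ?_⟩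
  · exact Stmt17Aux.gv_injective U φ
  · exact Stmt17Aux.unit_iff U φ
  · exact Stmt17Aux.atom_gx U φ
end

section
/- Let G be a group, let A and B be subgroups of G, and let φ : A ≃ B be a group isomorphism. Let M be the monoid presented by generators the elements of G together with one additional generator t, subject to all relations holding in G together with the relations at = tφ(a) for all a ∈ A. Then the canonical monoid homomorphism from M to the HNN extension G* = ⟨G, t | t⁻¹at = φ(a) for a ∈ A⟩ (sending each g ∈ G to its image in G* and t to the stable letter) is injective; moreover G* together with this map is the universal group of M: every monoid homomorphism from M to a group factors uniquely through it as a group homomorphism from G*. -/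
/-- The defining relations of the monoid
`Mon⟨G, t ∣ relations of G, a t = t φ(a) (a ∈ A)⟩` on the free monoid over the
alphabet `G ⊕ Unit` (`Sum.inr ()` playing the role of the stable letter `t`). -/
def hnnRel (G : Type*) [Group G] (A B : Subgroup G) (φ : A ≃* B) :
    FreeMonoid (G ⊕ Unit) → FreeMonoid (G ⊕ Unit) → Prop := fun w₁ w₂ =>
  (∃ a b : G, w₁ = FreeMonoid.of (Sum.inl a) * FreeMonoid.of (Sum.inl b) ∧
      w₂ = FreeMonoid.of (Sum.inl (a * b))) ∨
  (w₁ = FreeMonoid.of (Sum.inl (1 : G)) ∧ w₂ = 1) ∨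
  (∃ a : A, w₁ = FreeMonoid.of (Sum.inl (a : G)) * FreeMonoid.of (Sum.inr ()) ∧
      w₂ = FreeMonoid.of (Sum.inr ()) * FreeMonoid.of (Sum.inl ((φ a : B) : G)))

/-- The presented monoid `Mon⟨G, t ∣ relations of G, a t = t φ(a) (a ∈ A)⟩`. -/
def HNNMonoid (G : Type*) [Group G] (A B : Subgroup G) (φ : A ≃* B) :=
  (conGen (hnnRel G A B φ)).Quotient

instance (G : Type*) [Group G] (A B : Subgroup G) (φ : A ≃* B) :
    Monoid (HNNMonoid G A B φ) := by
  delta HNNMonoid; infer_instance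

namespace Stmt18Aux

variable {G : Type*} [Group G] {A B : Subgroup G} (φ : A ≃* B)

/-- Evaluation of a letter in the HNN extension. -/
def letter : G ⊕ Unit → HNNExtension G B A φ.symm :=
  Sum.elim (fun g => HNNExtension.of g) (fun _ => HNNExtension.t)

/-- Evaluation of a word in the HNN extension. -/
def θF : FreeMonoid (G ⊕ Unit) →* HNNExtension G B A φ.symm :=
  FreeMonoid.lift (letter φ)

@[simp] lemma θF_inl (g : G) : θF φ (FreeMonoid.of (Sum.inl g)) = HNNExtension.of g := rfl

@[simp] lemma θF_inr (u : Unit) : θF φ (FreeMonoid.of (Sum.inr u)) = HNNExtension.t := rfl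

lemma θF_rel : ∀ w₁ w₂, hnnRel G A B φ w₁ w₂ → θF φ w₁ = θF φ w₂ := by
  rintro w₁ w₂ (⟨a, b, rfl, rfl⟩ | ⟨rfl, rfl⟩ | ⟨a, rfl, rfl⟩)
  · simp
  · simp
  · simp only [map_mul, θF_inl, θF_inr]
    rw [HNNExtension.of_mul_t, MulEquiv.symm_symm]

/-- The canonical homomorphism from the presented monoid. -/
noncomputable def θ : HNNMonoid G A B φ →* HNNExtension G B A φ.symm :=
  (conGen (hnnRel G A B φ)).lift (θF φ)
    (Con.conGen_le.2 fun x y h => (Con.ker_rel _).2 (θF_rel φ x y h))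

lemma θ_mk' (w : FreeMonoid (G ⊕ Unit)) :
    θ φ ((conGen (hnnRel G A B φ)).mk' w) = θF φ w :=
  Con.lift_mk' _ _

lemma θ_comp_mk' :
    (θ φ).comp (conGen (hnnRel G A B φ)).mk' = θF φ :=
  Con.lift_comp_mk' _

/- Basic consequences of the defining relations in the quotient. -/

lemma mrel {w₁ w₂ : FreeMonoid (G ⊕ Unit)} (h : hnnRel G A B φ w₁ w₂) :
    (conGen (hnnRel G A B φ)).mk' w₁ = (conGen (hnnRel G A B φ)).mk' w₂ :=
  (Con.eq _).2 (ConGen.Rel.of _ _ h)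

lemma crel1 (a b : G) :
    (conGen (hnnRel G A B φ)).mk' (FreeMonoid.of (Sum.inl a)) *
      (conGen (hnnRel G A B φ)).mk' (FreeMonoid.of (Sum.inl b)) =
    (conGen (hnnRel G A B φ)).mk' (FreeMonoid.of (Sum.inl (a * b))) := by
  rw [← map_mul]
  exact mrel φ (Or.inl ⟨a, b, rfl, rfl⟩)

lemma crel2 :
    (conGen (hnnRel G A B φ)).mk' (FreeMonoid.of (Sum.inl (1 : G))) = 1 := by
  have h := mrel φ (Or.inr (Or.inl ⟨rfl, rfl⟩))
  rwa [map_one] at h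

lemma crel3 (a : A) :
    (conGen (hnnRel G A B φ)).mk' (FreeMonoid.of (Sum.inl (a : G))) *
      (conGen (hnnRel G A B φ)).mk' (FreeMonoid.of (Sum.inr ())) =
    (conGen (hnnRel G A B φ)).mk' (FreeMonoid.of (Sum.inr ())) *
      (conGen (hnnRel G A B φ)).mk' (FreeMonoid.of (Sum.inl ((φ a : B) : G))) := by
  rw [← map_mul, ← map_mul]
  exact mrel φ (Or.inr (Or.inr ⟨a, rfl, rfl⟩))

/- Normal forms. -/

variable (d : HNNExtension.NormalWord.TransversalPair G B A)

/-- Decompose `x : G` as `b * r` with `b ∈ B` and `r` in the transversal. -/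
noncomputable def dec (x : G) : B × G :=
  ⟨⟨(((d.compl 1).equiv x).1 : G), by exact (((d.compl 1).equiv x).1).2⟩,
    ((((d.compl 1).equiv x).2 : G))⟩

lemma dec_spec (x : G) : ((dec d x).1 : G) * (dec d x).2 = x :=
  (d.compl 1).equiv_fst_mul_equiv_snd x

lemma dec_mem (x : G) : (dec d x).2 ∈ d.set 1 :=
  (((d.compl 1).equiv x).2).2

/-- The normal form of a word: `(g, [r₁, …, rₙ])` represents `g t r₁ t r₂ ⋯ t rₙ`. -/
noncomputable def nf : List (G ⊕ Unit) → G × List G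
  | [] => (1, [])
  | Sum.inl g :: rest => ⟨g * (nf rest).1, (nf rest).2⟩
  | Sum.inr _ :: rest =>
      ⟨((φ.symm (dec d (nf rest).1).1 : A) : G),
        (dec d (nf rest).1).2 :: (nf rest).2⟩

/-- The tail of a canonical word. -/
def tail : List G → FreeMonoid (G ⊕ Unit)
  | [] => 1
  | r :: L => FreeMonoid.of (Sum.inr ()) * FreeMonoid.of (Sum.inl r) * tail L

/-- The canonical word associated to a normal form. -/
def can (p : G × List G) : FreeMonoid (G ⊕ Unit) :=
  FreeMonoid.of (Sum.inl p.1) * tail p.2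

lemma nf_mem : ∀ l : List (G ⊕ Unit), ∀ r ∈ (nf φ d l).2, r ∈ d.set 1 := by
  intro l
  induction l with
  | nil => simp [nf]
  | cons a rest ih =>
    cases a with
    | inl g => simpa [nf] using ih
    | inr u =>
      intro r hr
      simp only [nf, List.mem_cons] at hr
      rcases hr with rfl | hr
      · exact dec_mem d _
      · exact ih r hr

lemma mk'_can : ∀ l : List (G ⊕ Unit),
    (conGen (hnnRel G A B φ)).mk' (FreeMonoid.ofList l) =
      (conGen (hnnRel G A B φ)).mk' (can (nf φ d l)) := by
  set c := conGen (hnnRel G A B φ) with hc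
  intro l
  induction l with
  | nil =>
    simp only [FreeMonoid.ofList_nil, map_one, nf, can, tail, mul_one]
    exact (crel2 φ).symm
  | cons a rest ih =>
    cases a with
    | inl g =>
      rw [FreeMonoid.ofList_cons, map_mul, ih]
      simp only [can, nf, map_mul]
      rw [← mul_assoc, crel1]
    | inr u =>
      rw [FreeMonoid.ofList_cons, map_mul, ih]
      simp only [can, nf, tail, map_mul]
      set h := (nf φ d rest).1
      set L := (nf φ d rest).2
      set b := (dec d h).1
      set r := (dec d h).2
      have e1 : c.mk' (FreeMonoid.of (Sum.inr ())) * c.mk' (FreeMonoid.of (Sum.inl (b : G)))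
          = c.mk' (FreeMonoid.of (Sum.inl ((φ.symm b : A) : G))) *
              c.mk' (FreeMonoid.of (Sum.inr ())) := by
        have h3 := crel3 φ (φ.symm b)
        rw [MulEquiv.apply_symm_apply] at h3
        exact h3.symm
      have e2 : c.mk' (FreeMonoid.of (Sum.inl h))
          = c.mk' (FreeMonoid.of (Sum.inl (b : G))) * c.mk' (FreeMonoid.of (Sum.inl r)) := by
        rw [crel1, dec_spec]
      calc c.mk' (FreeMonoid.of (Sum.inr u)) *
            (c.mk' (FreeMonoid.of (Sum.inl h)) * c.mk' (tail L))
          = c.mk' (FreeMonoid.of (Sum.inr ())) * c.mk' (FreeMonoid.of (Sum.inl (b : G))) *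
              (c.mk' (FreeMonoid.of (Sum.inl r)) * c.mk' (tail L)) := by
            rw [e2]; cases u; simp [mul_assoc]
        _ = c.mk' (FreeMonoid.of (Sum.inl ((φ.symm b : A) : G))) *
              (c.mk' (FreeMonoid.of (Sum.inr ())) *
                (c.mk' (FreeMonoid.of (Sum.inl r)) * c.mk' (tail L))) := by
            rw [e1]; simp [mul_assoc]

lemma θF_tail : ∀ L : List G,
    θF φ (tail L) = (L.map fun r => HNNExtension.t * HNNExtension.of r).prod := by
  intro L
  induction L with
  | nil => simp [tail]
  | cons r L ih => simp [tail, ih, mul_assoc]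

/-- The mathlib `NormalWord` associated to a normal form. -/
noncomputable def nw (p : G × List G) (hp : ∀ r ∈ p.2, r ∈ d.set 1) :
    HNNExtension.NormalWord d where
  head := p.1
  toList := p.2.map fun r => (1, r)
  mem_set := by
    intro u g hg
    simp only [List.mem_map] at hg
    obtain ⟨r, hr, heq⟩ := hg
    obtain ⟨rfl, rfl⟩ := Prod.mk.injEq _ _ _ _ ▸ heq
    exact hp r hr
  chain := by
    induction p.2 with
    | nil => simp
    | cons r L ih =>
      cases L with
      | nil => simp
      | cons s L => simpa using ih

lemma nw_prod (p : G × List G) (hp : ∀ r ∈ p.2, r ∈ d.set 1) :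
    (nw d p hp).prod φ.symm = θF φ (can p) := by
  simp only [HNNExtension.NormalWord.ReducedWord.prod, nw, can, map_mul, θF_inl, θF_tail,
    List.map_map, Function.comp_def, Units.val_one, zpow_one]

end Stmt18Aux

open Stmt18Aux in
/-- Note: `HNNExtension G B A φ.symm` is the HNN extension in which
`a * t = t * φ(a)` for all `a ∈ A`, i.e. `t⁻¹ a t = φ(a)`.  The canonical
monoid homomorphism from the presented monoid to it is injective, and it makes
the HNN extension the universal group of the presented monoid. -/
theorem stmt18 {G : Type u} [Group G] (A B : Subgroup G) (φ : A ≃* B) :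
    ∃ θ : HNNMonoid G A B φ →* HNNExtension G B A φ.symm,
      (∀ g : G, θ ((conGen (hnnRel G A B φ)).mk' (FreeMonoid.of (Sum.inl g))) =
        HNNExtension.of g) ∧
      θ ((conGen (hnnRel G A B φ)).mk' (FreeMonoid.of (Sum.inr ()))) =
        HNNExtension.t ∧
      Function.Injective θ ∧
      ∀ (H : Type v) [Group H] (f : HNNMonoid G A B φ →* H),
        ∃! f' : HNNExtension G B A φ.symm →* H, f'.comp θ = f := by
  classical
  refine ⟨θ φ, fun g => θ_mk' φ _, θ_mk' φ _, ?_, ?_⟩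
  · -- injectivity
    obtain ⟨d⟩ := HNNExtension.NormalWord.TransversalPair.nonempty G B A
    intro x y hxy
    obtain ⟨wx, rfl⟩ := Con.mk'_surjective (c := conGen (hnnRel G A B φ)) x
    obtain ⟨wy, rfl⟩ := Con.mk'_surjective (c := conGen (hnnRel G A B φ)) y
    have hx : (conGen (hnnRel G A B φ)).mk' wx = (conGen (hnnRel G A B φ)).mk' (can (nf φ d (FreeMonoid.toList wx))) := mk'_can φ d _
    have hy : (conGen (hnnRel G A B φ)).mk' wy = (conGen (hnnRel G A B φ)).mk' (can (nf φ d (FreeMonoid.toList wy))) := mk'_can φ d _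
    have hprod : (nw d (nf φ d (FreeMonoid.toList wx)) (nf_mem φ d _)).prod φ.symm
        = (nw d (nf φ d (FreeMonoid.toList wy)) (nf_mem φ d _)).prod φ.symm := by
      rw [nw_prod, nw_prod, ← θ_mk' φ, ← θ_mk' φ, ← hx, ← hy]
      exact hxy
    have hnw := HNNExtension.NormalWord.prod_injective (φ := φ.symm) (d := d) hprod
    have hhead : (nf φ d (FreeMonoid.toList wx)).1 = (nf φ d (FreeMonoid.toList wy)).1 :=
      congrArg (fun w : HNNExtension.NormalWord d => w.head) hnw
    have hlist : (nf φ d (FreeMonoid.toList wx)).2 = (nf φ d (FreeMonoid.toList wy)).2 := by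
      have hmap := congrArg (fun w : HNNExtension.NormalWord d => w.toList) hnw
      simp only [nw] at hmap
      exact List.map_injective_iff.2
        (fun a b h => by simpa using (Prod.mk.injEq _ _ _ _ ▸ h).2) hmap
    have hpq : nf φ d (FreeMonoid.toList wx) = nf φ d (FreeMonoid.toList wy) :=
      Prod.ext hhead hlist
    rw [hx, hy, hpq]
  · -- universal property
    intro H _ f
    have fone : f ((conGen (hnnRel G A B φ)).mk' (FreeMonoid.of (Sum.inl (1 : G)))) = 1 := by
      erw [crel2 φ, map_one]
    have fmul : ∀ a b : G, f ((conGen (hnnRel G A B φ)).mk' (FreeMonoid.of (Sum.inl (a * b))))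
        = f ((conGen (hnnRel G A B φ)).mk' (FreeMonoid.of (Sum.inl a))) * f ((conGen (hnnRel G A B φ)).mk' (FreeMonoid.of (Sum.inl b))) := by
      intro a b
      erw [← crel1 φ, map_mul]
    set fG : G →* H :=
      { toFun := fun g => f ((conGen (hnnRel G A B φ)).mk' (FreeMonoid.of (Sum.inl g)))
        map_one' := fone
        map_mul' := fmul } with hfG
    set x : H := f ((conGen (hnnRel G A B φ)).mk' (FreeMonoid.of (Sum.inr ()))) with hx
    have hhx : ∀ b : B, x * fG (b : G) = fG ((φ.symm b : A) : G) * x := by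
      intro b
      have h3 := congrArg f (crel3 φ (φ.symm b))
      erw [MulEquiv.apply_symm_apply, map_mul, map_mul] at h3
      exact h3.symm
    have key : (HNNExtension.lift fG x hhx).comp (θ φ) = f := by
      have h1 : ((HNNExtension.lift fG x hhx).comp (θ φ)).comp (conGen (hnnRel G A B φ)).mk'
          = f.comp (conGen (hnnRel G A B φ)).mk' := by
        erw [MonoidHom.comp_assoc, θ_comp_mk']
        apply FreeMonoid.hom_eq
        rintro (g | u)
        · exact HNNExtension.lift_of fG x hhx g
        · cases u; exact HNNExtension.lift_t fG x hhx
      exact Con.lift_funext _ _ fun w => DFunLike.congr_fun h1 w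
    refine ⟨HNNExtension.lift fG x hhx, key, ?_⟩
    intro f'' h''
    have hext : ∀ (f₀ : HNNExtension G B A φ.symm →* H), f₀.comp (θ φ) = f →
        ∀ w : FreeMonoid (G ⊕ Unit), f₀ (θF φ w) = f ((conGen (hnnRel G A B φ)).mk' w) := by
      intro f₀ h₀ w
      have hw := DFunLike.congr_fun h₀ ((conGen (hnnRel G A B φ)).mk' w)
      have hw2 : f₀ ((θ φ) ((conGen (hnnRel G A B φ)).mk' w))
          = f ((conGen (hnnRel G A B φ)).mk' w) := hw
      rwa [θ_mk' φ] at hw2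
    apply HNNExtension.hom_ext
    · apply MonoidHom.ext; intro g
      have e1 := hext f'' h'' (FreeMonoid.of (Sum.inl g))
      have e2 := hext _ key (FreeMonoid.of (Sum.inl g))
      simp only [θF_inl] at e1 e2
      simp only [MonoidHom.comp_apply]
      rw [e1, e2]
    · have e1 := hext f'' h'' (FreeMonoid.of (Sum.inr ()))
      have e2 := hext _ key (FreeMonoid.of (Sum.inr ()))
      simp only [θF_inr] at e1 e2
      rw [e1, e2]
end
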